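/- arXiv:1911.00929 — 8 statements merged into one kernel-verified Lean document; each statement's English description precedes it below -/
import Mathlib

section
/- (Brouwer's Theorem) Every nonempty compact, metrizable, totally disconnected, and perfect topological space is homeomorphic to the middle-thirds Cantor set. Equivalently, any two nonempty compact, metrizable, totally disconnected, perfect topological spaces are homeomorphic. -/
set_option linter.unusedSectionVars false

open Set Metric TopologicalSpace Function

section Abstract

variable {X : Type*} [MetricSpace X] [CompactSpace X] [TotallyDisconnectedSpace X]
  [PerfectSpace X] [Nonempty X]

/-- Every nonempty open set in a perfect space contains two distinct points. -/
lemma brouwer_exists_pair {U : Set X} (hne : U.Nonempty) (hU : IsOpen U) :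
    ∃ x ∈ U, ∃ y ∈ U, x ≠ y := by
  obtain ⟨x, hx⟩ := hne
  have h := preperfect_iff_nhds.mp PerfectSpace.univ_preperfect x (mem_univ x) U
    (hU.mem_nhds hx)
  obtain ⟨y, ⟨hyU, -⟩, hyx⟩ := h
  exact ⟨y, hyU, x, hx, hyx⟩

lemma brouwer_split {U : Set X} (hU : IsClopen U) {x y : X} (hx : x ∈ U) (hy : y ∈ U)
    (hxy : x ≠ y) :
    ∃ V W : Set X, IsClopen V ∧ IsClopen W ∧ V.Nonempty ∧ W.Nonempty ∧ Disjoint V W ∧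
      V ∪ W = U := by
  obtain ⟨C, hC, hxC, hCy⟩ := compact_exists_isClopen_in_isOpen
    (isOpen_compl_singleton (x := y)) (by simpa using hxy)
  refine ⟨U ∩ C, U \ C, hU.inter hC, hU.diff hC, ⟨x, hx, hxC⟩, ⟨y, hy, fun hyC => ?_⟩,
    ?_, inter_union_diff U C⟩
  · exact hCy hyC rfl
  · exact disjoint_left.2 fun z hz hz' => hz'.2 hz.2

/-- Split a nonempty clopen set into `m+1` nonempty clopen pieces. -/
lemma brouwer_partition_fin (m : ℕ) :
    ∀ U : Set X, IsClopen U → U.Nonempty →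
      ∃ f : Fin (m + 1) → Set X, (∀ i, IsClopen (f i)) ∧ (∀ i, (f i).Nonempty) ∧
        Pairwise (Function.onFun Disjoint f) ∧ ⋃ i, f i = U := by
  induction m with
  | zero =>
    intro U hU hne
    refine ⟨fun _ => U, fun _ => hU, fun _ => hne, fun i j hij => absurd (Fin.ext (by omega)) hij, by simp [iUnion_const]⟩
  | succ m ih =>
    intro U hU hne
    obtain ⟨x, hx, y, hy, hxy⟩ := brouwer_exists_pair hne hU.2
    obtain ⟨V, W, hV, hW, hVne, hWne, hdisj, hunion⟩ := brouwer_split hU hx hy hxy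
    obtain ⟨g, hg1, hg2, hg3, hg4⟩ := ih V hV hVne
    have hgV : ∀ i, g i ⊆ V := fun i => hg4 ▸ subset_iUnion g i
    refine ⟨Fin.cons W g, ?_, ?_, ?_, ?_⟩
    · intro i
      induction i using Fin.cases with
      | zero => simpa using hW
      | succ i => simpa using hg1 i
    · intro i
      induction i using Fin.cases with
      | zero => simpa using hWne
      | succ i => simpa using hg2 i
    · intro i j hij
      induction i using Fin.cases with
      | zero =>
        induction j using Fin.cases with
        | zero => exact absurd rfl hij
        | succ j =>
          simp only [onFun, Fin.cons_zero, Fin.cons_succ]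
          exact hdisj.symm.mono_right (hgV j)
      | succ i =>
        induction j using Fin.cases with
        | zero =>
          simp only [onFun, Fin.cons_zero, Fin.cons_succ]
          exact hdisj.mono_left (hgV i)
        | succ j =>
          simp only [onFun, Fin.cons_zero, Fin.cons_succ]
          exact hg3 (fun h => hij (by rw [h]))
    · rw [← hunion]
      ext z
      simp only [mem_iUnion, mem_union]
      constructor
      · rintro ⟨i, hi⟩
        induction i using Fin.cases with
        | zero => exact Or.inr (by simpa using hi)
        | succ i => exact Or.inl (hg4 ▸ mem_iUnion.2 ⟨i, by simpa using hi⟩)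
      · rintro (hz | hz)
        · rw [← hg4] at hz
          obtain ⟨i, hi⟩ := mem_iUnion.1 hz
          exact ⟨i.succ, by simpa using hi⟩
        · exact ⟨0, by simpa using hz⟩

/-- Split a nonempty clopen set into nonempty clopen pieces indexed by any nonempty
finite type. -/
lemma brouwer_partition_fintype (ι : Type) [Fintype ι] [Nonempty ι] {U : Set X}
    (hU : IsClopen U) (hne : U.Nonempty) :
    ∃ f : ι → Set X, (∀ i, IsClopen (f i)) ∧ (∀ i, (f i).Nonempty) ∧
      Pairwise (Function.onFun Disjoint f) ∧ ⋃ i, f i = U := by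
  obtain ⟨m, hm⟩ : ∃ m, Fintype.card ι = m + 1 :=
    ⟨Fintype.card ι - 1, (Nat.succ_pred_eq_of_pos Fintype.card_pos).symm⟩
  obtain ⟨g, hg1, hg2, hg3, hg4⟩ := brouwer_partition_fin m U hU hne
  let e : ι ≃ Fin (m + 1) := (Fintype.equivFinOfCardEq hm)
  refine ⟨g ∘ e, fun i => hg1 _, fun i => hg2 _, ?_, ?_⟩
  · exact fun i j hij => hg3 (fun h => hij (e.injective h))
  · rw [← hg4]
    exact e.surjective.iUnion_comp g


lemma brouwer_partition_small {U : Set X} (hU : IsClopen U) (hne : U.Nonempty) {ε : ℝ}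
    (hε : 0 < ε) :
    ∃ (ι : Type) (_ : Fintype ι) (_ : Nonempty ι) (f : ι → Set X),
      (∀ i, IsClopen (f i)) ∧ (∀ i, (f i).Nonempty) ∧ (∀ i, diam (f i) < ε) ∧
      Pairwise (Function.onFun Disjoint f) ∧ ⋃ i, f i = U := by
  classical
  have hVex : ∀ x : U, ∃ V : Set X, IsClopen V ∧ (x : X) ∈ V ∧ V ⊆ ball (x : X) (ε / 3) ∩ U :=
    fun x => compact_exists_isClopen_in_isOpen (isOpen_ball.inter hU.2)
      ⟨mem_ball_self (by positivity), x.2⟩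
  choose V hVclopen hVmem hVsub using hVex
  have hUcomp : IsCompact U := hU.1.isCompact
  have hcover : U ⊆ ⋃ x : U, V x := fun z hz => mem_iUnion.2 ⟨⟨z, hz⟩, hVmem _⟩
  obtain ⟨t, ht⟩ := hUcomp.elim_finite_subcover (fun x : U => V x)
    (fun x => (hVclopen x).2) hcover
  have htne : t.Nonempty := by
    obtain ⟨z, hz⟩ := hne
    obtain ⟨x, hx, -⟩ := mem_iUnion₂.1 (ht hz)
    exact ⟨x, hx⟩
  set n := t.card with hn
  have hnpos : 0 < n := Finset.card_pos.2 htne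
  let e : Fin n → U := fun i => (t.equivFin.symm i : U)
  let g : Fin n → Set X := fun i => V (e i) \ ⋃ j : Fin n, ⋃ _ : j < i, V (e j)
  have hgclopen : ∀ i, IsClopen (g i) := by
    intro i
    refine (hVclopen _).diff ?_
    refine isClopen_iUnion_of_finite fun j => ?_
    exact isClopen_iUnion_of_finite fun _ => hVclopen _
  have hgsub : ∀ i, g i ⊆ V (e i) := fun i => diff_subset
  have hgU : ∀ i, g i ⊆ U := fun i => (hgsub i).trans ((hVsub _).trans inter_subset_right)
  have hgdiam : ∀ i, diam (g i) < ε := by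
    intro i
    have h1 : g i ⊆ ball (e i : X) (ε / 3) := (hgsub i).trans ((hVsub _).trans inter_subset_left)
    calc diam (g i) ≤ diam (ball (e i : X) (ε / 3)) := diam_mono h1 isBounded_ball
      _ ≤ 2 * (ε / 3) := diam_ball (by positivity)
      _ < ε := by linarith
  have hgkey : ∀ i j : Fin n, i < j → Disjoint (g i) (g j) := by
    intro i j hlt
    refine disjoint_left.2 fun z hzi hzj => ?_
    exact hzj.2 (mem_iUnion.2 ⟨i, mem_iUnion.2 ⟨hlt, hgsub i hzi⟩⟩)
  have hgdisj : Pairwise (Function.onFun Disjoint g) := fun i j hij =>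
    (lt_or_gt_of_ne hij).elim (hgkey i j) (fun h => (hgkey j i h).symm)
  have hgunion : ⋃ i, g i = U := by
    apply subset_antisymm
    · exact iUnion_subset hgU
    · intro z hz
      have hex : ∃ i : Fin n, z ∈ V (e i) := by
        obtain ⟨x, hx, hzx⟩ := mem_iUnion₂.1 (ht hz)
        exact ⟨t.equivFin ⟨x, hx⟩, by simpa [e] using hzx⟩
      let s : Finset (Fin n) := Finset.univ.filter fun i => z ∈ V (e i)
      have hsne : s.Nonempty := by
        obtain ⟨i, hi⟩ := hex
        exact ⟨i, by simp [s, hi]⟩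
      set i0 := s.min' hsne with hi0
      have hzi0 : z ∈ V (e i0) := by
        have := s.min'_mem hsne
        simpa [s] using this
      refine mem_iUnion.2 ⟨i0, hzi0, ?_⟩
      intro hmem
      obtain ⟨j, hj⟩ := mem_iUnion.1 hmem
      obtain ⟨hjlt, hzj⟩ := mem_iUnion.1 hj
      have : i0 ≤ j := s.min'_le j (by simp [s, hzj])
      omega
  have hgne_ex : ∃ i, (g i).Nonempty := by
    obtain ⟨z, hz⟩ := hne
    rw [← hgunion] at hz
    obtain ⟨i, hi⟩ := mem_iUnion.1 hz
    exact ⟨i, ⟨z, hi⟩⟩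
  refine ⟨{i : Fin n // (g i).Nonempty}, inferInstance, ⟨⟨hgne_ex.choose, hgne_ex.choose_spec⟩⟩,
    fun i => g i.1, fun i => hgclopen _, fun i => i.2, fun i => hgdiam _,
    fun i j hij => hgdisj (fun h => hij (Subtype.ext h)), ?_⟩
  apply subset_antisymm
  · exact iUnion_subset fun i => hgU i.1
  · intro z hz
    rw [← hgunion] at hz
    obtain ⟨i, hi⟩ := mem_iUnion.1 hz
    exact mem_iUnion.2 ⟨⟨i, ⟨z, hi⟩⟩, hi⟩


/-- A nonempty clopen set can be partitioned into `2^d` small nonempty clopen pieces,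
for every sufficiently large `d`. -/
lemma brouwer_partition_pow {U : Set X} (hU : IsClopen U) (hne : U.Nonempty) {ε : ℝ}
    (hε : 0 < ε) :
    ∃ N : ℕ, ∀ d : ℕ, N ≤ d → ∃ f : (Fin d → Bool) → Set X,
      (∀ b, IsClopen (f b)) ∧ (∀ b, (f b).Nonempty) ∧ (∀ b, diam (f b) < ε) ∧
      Pairwise (Function.onFun Disjoint f) ∧ ⋃ b, f b = U := by
  classical
  obtain ⟨ι, _, _, f, hf1, hf2, hf3, hf4, hf5⟩ := brouwer_partition_small hU hne hε
  refine ⟨Fintype.card ι, fun d hd => ?_⟩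
  have hcard : Fintype.card ι ≤ Fintype.card (Fin d → Bool) := by
    rw [Fintype.card_fun, Fintype.card_bool, Fintype.card_fin]
    calc Fintype.card ι ≤ 2 ^ Fintype.card ι := Nat.lt_two_pow_self.le
      _ ≤ 2 ^ d := Nat.pow_le_pow_right (by norm_num) hd
  obtain ⟨φ⟩ := Function.Embedding.nonempty_of_card_le hcard
  let ψ : (Fin d → Bool) → ι := Function.invFun φ
  have hψ : Function.Surjective ψ := Function.invFun_surjective φ.injective
  -- for each i, partition f i by the fiber of ψ over i
  have hpart : ∀ i : ι, ∃ H : (Fin d → Bool) → Set X,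
      (∀ b, ψ b ≠ i → H b = ∅) ∧
      (∀ b, ψ b = i → IsClopen (H b) ∧ (H b).Nonempty) ∧
      (Pairwise (Function.onFun Disjoint H)) ∧ ⋃ b, H b = f i := by
    intro i
    haveI : Nonempty {b // ψ b = i} := by
      obtain ⟨b, hb⟩ := hψ i
      exact ⟨⟨b, hb⟩⟩
    obtain ⟨p, hp1, hp2, hp3, hp4⟩ :=
      brouwer_partition_fintype {b : Fin d → Bool // ψ b = i} (hf1 i) (hf2 i)
    refine ⟨fun b => if h : ψ b = i then p ⟨b, h⟩ else ∅, fun b hb => dif_neg hb,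
      fun b hb => by simp only [dif_pos hb]; exact ⟨hp1 _, hp2 _⟩, ?_, ?_⟩
    · intro b b' hbb'
      simp only [Function.onFun]
      split_ifs with h1 h2 h2
      · exact hp3 fun hc => hbb' (congrArg Subtype.val hc)
      · exact disjoint_empty _
      · exact (disjoint_empty _).symm
      · exact disjoint_empty _
    · ext z
      simp only [mem_iUnion]
      constructor
      · rintro ⟨b, hb⟩
        by_cases h : ψ b = i
        · rw [dif_pos h] at hb
          exact hp4 ▸ mem_iUnion.2 ⟨⟨b, h⟩, hb⟩
        · rw [dif_neg h] at hb; exact absurd hb (notMem_empty z)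
      · intro hz
        rw [← hp4] at hz
        obtain ⟨⟨b, hb⟩, hzb⟩ := mem_iUnion.1 hz
        exact ⟨b, by rw [dif_pos hb]; exact hzb⟩
  choose H hH1 hH2 hH3 hH4 using hpart
  have hHsub : ∀ i b, H i b ⊆ f i := fun i b => (hH4 i) ▸ subset_iUnion (H i) b
  refine ⟨fun b => H (ψ b) b, fun b => (hH2 _ b rfl).1, fun b => (hH2 _ b rfl).2,
    fun b => ?_, ?_, ?_⟩
  · calc diam (H (ψ b) b) ≤ diam (f (ψ b)) :=
        diam_mono (hHsub _ _) (((hf1 _).1.isCompact).isBounded)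
      _ < ε := hf3 _
  · intro b b' hbb'
    simp only [Function.onFun]
    by_cases h : ψ b = ψ b'
    · rw [h]
      have := hH3 (ψ b') hbb'
      simpa [Function.onFun] using this
    · exact Disjoint.mono (hHsub _ _) (hHsub _ _) (hf4 h)
  · apply subset_antisymm
    · rw [← hf5]
      exact iUnion_subset fun b => (hHsub _ _).trans (subset_iUnion f (ψ b))
    · intro z hz
      rw [← hf5] at hz
      obtain ⟨i, hzi⟩ := mem_iUnion.1 hz
      rw [← hH4 i] at hzi
      obtain ⟨b, hzb⟩ := mem_iUnion.1 hzi
      have hb : ψ b = i := by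
        by_contra h
        rw [hH1 i b h] at hzb
        exact hzb
      exact mem_iUnion.2 ⟨b, by rw [hb]; exact hzb⟩

/-- Data of the `t`-th stage of the Brouwer tower: a partition of `X` into nonempty
clopen pieces of diameter `< (1/2)^t` (no diameter requirement at `t = 0`),
indexed by `Fin d → Bool`. -/
structure BrouwerStage (X : Type*) [MetricSpace X] (t : ℕ) where
  d : ℕ
  S : (Fin d → Bool) → Set X
  hd : t ≤ d
  clopen : ∀ σ, IsClopen (S σ)
  nonempty : ∀ σ, (S σ).Nonempty
  small : ∀ σ, diam (S σ) < (1/2 : ℝ)^t ∨ t = 0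
  disj : Pairwise (Function.onFun Disjoint (S ·))
  cover : ⋃ σ, S σ = univ

/-- The base stage. -/
def brouwerBase : BrouwerStage X 0 where
  d := 0
  S := fun _ => univ
  hd := le_refl 0
  clopen := fun _ => isClopen_univ
  nonempty := fun _ => univ_nonempty
  small := fun _ => Or.inr rfl
  disj := fun σ τ hst => absurd (funext fun i => absurd i.2 (by omega)) hst
  cover := iUnion_const univ

lemma brouwer_step (t : ℕ) (s : BrouwerStage X t) :
    ∃ s' : BrouwerStage X (t + 1), ∃ h : s.d ≤ s'.d,
      ∀ τ, s'.S τ ⊆ s.S (fun i => τ (Fin.castLE h i)) := by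
  classical
  have hε : (0:ℝ) < (1/2)^(t+1) := by positivity
  have hN : ∀ σ : Fin s.d → Bool, ∃ N : ℕ, ∀ e : ℕ, N ≤ e →
      ∃ f : (Fin e → Bool) → Set X,
      (∀ b, IsClopen (f b)) ∧ (∀ b, (f b).Nonempty) ∧ (∀ b, diam (f b) < (1/2)^(t+1)) ∧
      Pairwise (Function.onFun Disjoint f) ∧ ⋃ b, f b = s.S σ :=
    fun σ => brouwer_partition_pow (s.clopen σ) (s.nonempty σ) hε
  choose N hNspec using hN
  set e : ℕ := 1 + Finset.univ.sup N with he
  have hee : ∀ σ, N σ ≤ e := fun σ => le_add_of_nonneg_of_le (by omega)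
    (Finset.le_sup (Finset.mem_univ σ))
  have hpart := fun σ => hNspec σ e (hee σ)
  choose P hP1 hP2 hP3 hP4 hP5 using hpart
  have hPsub : ∀ σ ρ, P σ ρ ⊆ s.S σ := fun σ ρ => (hP5 σ) ▸ subset_iUnion (P σ) ρ
  -- splitting and gluing of indices
  let first : (Fin (s.d + e) → Bool) → (Fin s.d → Bool) := fun τ i => τ (Fin.castAdd e i)
  let second : (Fin (s.d + e) → Bool) → (Fin e → Bool) := fun τ j => τ (Fin.natAdd s.d j)
  let glue : (Fin s.d → Bool) → (Fin e → Bool) → (Fin (s.d + e) → Bool) :=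
    fun σ ρ i => Fin.addCases σ ρ i
  have hfg : ∀ σ ρ, first (glue σ ρ) = σ := fun σ ρ => funext fun i => by
    simp [first, glue, Fin.addCases_left]
  have hsg : ∀ σ ρ, second (glue σ ρ) = ρ := fun σ ρ => funext fun j => by
    simp [second, glue, Fin.addCases_right]
  have hgfs : ∀ τ, glue (first τ) (second τ) = τ := by
    intro τ
    funext i
    refine Fin.addCases (fun i => ?_) (fun j => ?_) i
    · simp [glue, first, Fin.addCases_left]
    · simp [glue, second, Fin.addCases_right]
  refine ⟨⟨s.d + e, fun τ => P (first τ) (second τ), by have := s.hd; omega,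
    fun τ => hP1 _ _, fun τ => hP2 _ _, fun τ => Or.inl (hP3 _ _), ?_, ?_⟩,
    by simp, ?_⟩
  · -- pairwise disjoint
    intro τ τ' hne
    simp only [Function.onFun]
    by_cases h : first τ = first τ'
    · have h2 : second τ ≠ second τ' := by
        intro h2
        exact hne (by rw [← hgfs τ, ← hgfs τ', h, h2])
      rw [h]
      exact hP4 _ h2
    · exact Disjoint.mono (hPsub _ _) (hPsub _ _) (s.disj h)
  · -- cover
    apply eq_univ_of_forall
    intro x
    have hx : x ∈ ⋃ σ, s.S σ := by rw [s.cover]; trivial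
    obtain ⟨σ, hσ⟩ := mem_iUnion.1 hx
    rw [← hP5 σ] at hσ
    obtain ⟨ρ, hρ⟩ := mem_iUnion.1 hσ
    refine mem_iUnion.2 ⟨glue σ ρ, ?_⟩
    simpa [hfg, hsg] using hρ
  · -- refinement
    intro τ
    have : (fun i => τ (Fin.castLE (by omega : s.d ≤ s.d + e) i)) = first τ := by
      funext i
      rfl
    rw [this]
    exact hPsub _ _



/-- The Brouwer tower of refining clopen partitions. -/
noncomputable def brouwerTower : ∀ t : ℕ, BrouwerStage X t
  | 0 => brouwerBase
  | (t+1) => (brouwer_step t (brouwerTower t)).choose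

lemma brouwerTower_le (t : ℕ) :
    (brouwerTower (X := X) t).d ≤ (brouwerTower (X := X) (t+1)).d :=
  (brouwer_step t (brouwerTower t)).choose_spec.choose

lemma brouwerTower_refines (t : ℕ) (τ : Fin (brouwerTower (X := X) (t+1)).d → Bool) :
    (brouwerTower (X := X) (t+1)).S τ ⊆
      (brouwerTower (X := X) t).S (fun i => τ (Fin.castLE (brouwerTower_le t) i)) :=
  (brouwer_step t (brouwerTower t)).choose_spec.choose_spec τ

lemma brouwerTower_mono {t t' : ℕ} (h : t ≤ t') :
    (brouwerTower (X := X) t).d ≤ (brouwerTower (X := X) t').d := by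
  induction t' , h using Nat.le_induction with
  | base => exact le_refl _
  | succ t' h ih => exact ih.trans (brouwerTower_le t')

/-- The branch sets of the Brouwer tower. -/
noncomputable def brouwerF (x : ℕ → Bool) (t : ℕ) : Set X :=
  (brouwerTower t).S (fun i => x i)

lemma brouwerF_nested (x : ℕ → Bool) (t : ℕ) :
    brouwerF (X := X) x (t+1) ⊆ brouwerF x t := by
  have h := brouwerTower_refines (X := X) t (fun i => x i)
  exact h

lemma brouwerF_anti (x : ℕ → Bool) {t t' : ℕ} (h : t ≤ t') :
    brouwerF (X := X) x t' ⊆ brouwerF x t := by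
  induction t' , h using Nat.le_induction with
  | base => exact le_refl _
  | succ t' h ih => exact (brouwerF_nested x t').trans ih

lemma brouwerF_diam (x : ℕ → Bool) (t : ℕ) :
    diam (brouwerF (X := X) x (t+1)) < (1/2 : ℝ)^(t+1) :=
  ((brouwerTower (t+1)).small _).resolve_right (by omega)

lemma brouwerF_nonempty (x : ℕ → Bool) (t : ℕ) : (brouwerF (X := X) x t).Nonempty :=
  (brouwerTower t).nonempty _

lemma brouwerF_isClosed (x : ℕ → Bool) (t : ℕ) : IsClosed (brouwerF (X := X) x t) :=
  ((brouwerTower t).clopen _).1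

lemma brouwerF_iInter_nonempty (x : ℕ → Bool) :
    (⋂ t, brouwerF (X := X) x t).Nonempty :=
  IsCompact.nonempty_iInter_of_sequence_nonempty_isCompact_isClosed _
    (brouwerF_nested x) (brouwerF_nonempty x)
    ((brouwerF_isClosed x 0).isCompact) (brouwerF_isClosed x)

lemma brouwerF_unique (x : ℕ → Bool) {p q : X} (hp : ∀ t, p ∈ brouwerF x t)
    (hq : ∀ t, q ∈ brouwerF x t) : p = q := by
  have hdist : ∀ t : ℕ, dist p q ≤ (1/2 : ℝ)^(t+1) := by
    intro t
    have hb : Bornology.IsBounded (brouwerF (X := X) x (t+1)) :=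
      (brouwerF_isClosed x (t+1)).isCompact.isBounded
    exact (dist_le_diam_of_mem hb (hp (t+1)) (hq (t+1))).trans (brouwerF_diam x t).le
  have hlim : Filter.Tendsto (fun t : ℕ => (1/2 : ℝ)^(t+1)) Filter.atTop (nhds 0) := by
    have h := tendsto_pow_atTop_nhds_zero_of_lt_one (by norm_num : (0:ℝ) ≤ 1/2)
      (by norm_num : (1/2 : ℝ) < 1)
    exact h.comp (Filter.tendsto_add_atTop_nat 1)
  have : dist p q ≤ 0 := ge_of_tendsto hlim (Filter.Eventually.of_forall hdist)
  have := le_antisymm this dist_nonneg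
  exact dist_eq_zero.1 this

/-- The limit map of the Brouwer tower. -/
noncomputable def brouwerLimit (x : ℕ → Bool) : X :=
  (brouwerF_iInter_nonempty (X := X) x).some

lemma brouwerLimit_mem (x : ℕ → Bool) (t : ℕ) : brouwerLimit (X := X) x ∈ brouwerF x t := by
  have := (brouwerF_iInter_nonempty (X := X) x).some_mem
  rw [mem_iInter] at this
  exact this t

lemma brouwerLimit_eq (x : ℕ → Bool) {p : X} (hp : ∀ t, p ∈ brouwerF x t) :
    p = brouwerLimit x :=
  brouwerF_unique x hp (brouwerLimit_mem x)

lemma brouwerLimit_injective : Function.Injective (brouwerLimit (X := X)) := by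
  intro x y hxy
  by_contra hne
  obtain ⟨n, hn⟩ := Function.ne_iff.1 hne
  have hd : n < (brouwerTower (X := X) (n+1)).d := lt_of_lt_of_le (Nat.lt_succ_self n)
    ((brouwerTower (n+1)).hd)
  have hστ : (fun i : Fin (brouwerTower (X := X) (n+1)).d => x i) ≠ (fun i : Fin (brouwerTower (X := X) (n+1)).d => y i) := by
    intro h
    exact hn (congrFun h ⟨n, hd⟩)
  have hdisj := (brouwerTower (X := X) (n+1)).disj hστ
  have h1 := brouwerLimit_mem (X := X) x (n+1)
  have h2 := brouwerLimit_mem (X := X) y (n+1)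
  rw [hxy] at h1
  exact (disjoint_left.1 hdisj) h1 h2

lemma brouwerLimit_surjective : Function.Surjective (brouwerLimit (X := X)) := by
  intro p
  have hex : ∀ t : ℕ, ∃ σ : Fin (brouwerTower (X := X) t).d → Bool,
      p ∈ (brouwerTower t).S σ := by
    intro t
    have : p ∈ ⋃ σ, (brouwerTower (X := X) t).S σ := by rw [(brouwerTower t).cover]; trivial
    exact mem_iUnion.1 this
  choose σc hσc using hex
  have hcons : ∀ t : ℕ,
      (fun i => σc (t+1) (Fin.castLE (brouwerTower_le t) i)) = σc t := by
    intro t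
    by_contra hne
    have hdisj := (brouwerTower (X := X) t).disj hne
    have h1 : p ∈ (brouwerTower (X := X) t).S
        (fun i => σc (t+1) (Fin.castLE (brouwerTower_le t) i)) :=
      brouwerTower_refines t (σc (t+1)) (hσc (t+1))
    exact (disjoint_left.1 hdisj) h1 (hσc t)
  have hcompat : ∀ t t' : ℕ, ∀ h : t ≤ t',
      (fun i => σc t' (Fin.castLE (brouwerTower_mono h) i)) = σc t := by
    intro t t' h
    induction t' , h using Nat.le_induction with
    | base =>
      funext i
      exact congrArg (σc t) (Fin.ext rfl)
    | succ t' h ih =>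
      funext i
      have e1 := congrFun (hcons t') (Fin.castLE (brouwerTower_mono h) i)
      have e2 := congrFun ih i
      calc σc (t'+1) (Fin.castLE (brouwerTower_mono (h.trans (Nat.le_succ t'))) i)
          = σc (t'+1) (Fin.castLE (brouwerTower_le t')
              (Fin.castLE (brouwerTower_mono h) i)) := congrArg _ (Fin.ext rfl)
        _ = σc t' (Fin.castLE (brouwerTower_mono h) i) := e1
        _ = σc t i := e2
  set x0 : ℕ → Bool := fun n => σc (n+1) ⟨n, lt_of_lt_of_le (Nat.lt_succ_self n)
    ((brouwerTower (n+1)).hd)⟩ with hx0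
  have hclaim : ∀ t, (fun i : Fin (brouwerTower (X := X) t).d => x0 ↑i) = σc t := by
    intro t
    funext i
    have hi1 : (i : ℕ) + 1 ≤ max ((i : ℕ) + 1) t := le_max_left _ _
    have hi2 : t ≤ max ((i : ℕ) + 1) t := le_max_right _ _
    have e1 := congrFun (hcompat ((i : ℕ) + 1) (max ((i : ℕ) + 1) t) hi1)
      (⟨(i : ℕ), lt_of_lt_of_le (Nat.lt_succ_self _) ((brouwerTower ((i : ℕ) + 1)).hd)⟩ :
        Fin (brouwerTower (X := X) ((i : ℕ) + 1)).d)
    have e2 := congrFun (hcompat t (max ((i : ℕ) + 1) t) hi2) i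
    simp only [hx0]
    rw [← e1, ← e2]
    exact congrArg (σc _) (Fin.ext rfl)
  refine ⟨x0, (brouwerLimit_eq x0 (p := p) ?_).symm⟩
  intro t
  show p ∈ (brouwerTower t).S (fun i => x0 ↑i)
  rw [hclaim t]
  exact hσc t

lemma brouwerLimit_continuous : Continuous (brouwerLimit (X := X)) := by
  rw [continuous_iff_continuousAt]
  intro x
  rw [ContinuousAt, Metric.tendsto_nhds]
  intro ε hε
  obtain ⟨t, ht⟩ := exists_pow_lt_of_lt_one hε (by norm_num : (1/2 : ℝ) < 1)
  set d := (brouwerTower (X := X) (t+1)).d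
  have hopen : IsOpen (⋂ i : Fin d, (fun y : ℕ → Bool => y ↑i) ⁻¹' {x ↑i}) :=
    isOpen_iInter_of_finite fun i =>
      (continuous_apply (↑i : ℕ)).isOpen_preimage _ (isOpen_discrete _)
  have hxmem : x ∈ ⋂ i : Fin d, (fun y : ℕ → Bool => y ↑i) ⁻¹' {x ↑i} := by
    simp
  refine Filter.eventually_iff_exists_mem.2
    ⟨_, hopen.mem_nhds hxmem, fun y hy => ?_⟩
  have hagree : (fun i : Fin d => y ↑i) = fun i : Fin d => x ↑i := by
    funext i
    exact mem_iInter.1 hy i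
  have h1 : brouwerLimit y ∈ brouwerF (X := X) x (t+1) := by
    have := brouwerLimit_mem (X := X) y (t+1)
    unfold brouwerF at this ⊢
    rwa [hagree] at this
  have h2 := brouwerLimit_mem (X := X) x (t+1)
  have hb : Bornology.IsBounded (brouwerF (X := X) x (t+1)) :=
    (brouwerF_isClosed x (t+1)).isCompact.isBounded
  calc dist (brouwerLimit y) (brouwerLimit x) ≤ diam (brouwerF (X := X) x (t+1)) :=
      dist_le_diam_of_mem hb h1 h2
    _ < (1/2 : ℝ)^(t+1) := brouwerF_diam x t
    _ ≤ (1/2 : ℝ)^t :=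
        pow_le_pow_of_le_one (by norm_num) (by norm_num) (Nat.le_succ t)
    _ < ε := ht

/-- Any nonempty compact metric space which is totally disconnected and perfect is
homeomorphic to the Cantor space `ℕ → Bool`. -/
noncomputable def brouwerHomeoCantorSpace : (ℕ → Bool) ≃ₜ X :=
  Continuous.homeoOfEquivCompactToT2
    (f := Equiv.ofBijective (brouwerLimit (X := X))
      ⟨brouwerLimit_injective, brouwerLimit_surjective⟩)
    brouwerLimit_continuous

end Abstract

lemma brouwer_preCantorSet_antitone : ∀ n, preCantorSet (n+1) ⊆ preCantorSet n := by
  intro n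
  induction n with
  | zero =>
    rintro x (⟨a, ha, rfl⟩ | ⟨a, ha, rfl⟩) <;>
      exact ⟨by simp at ha ⊢; linarith [ha.1, ha.2], by simp at ha ⊢; linarith [ha.1, ha.2]⟩
  | succ n ih =>
    rintro x (⟨a, ha, rfl⟩ | ⟨a, ha, rfl⟩)
    · exact Or.inl ⟨a, ih ha, rfl⟩
    · exact Or.inr ⟨a, ih ha, rfl⟩

lemma brouwer_preCantorSet_subset (n : ℕ) : preCantorSet n ⊆ Icc 0 1 := by
  induction n with
  | zero => exact le_refl _
  | succ n ih => exact (brouwer_preCantorSet_antitone n).trans ih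

/-- An interval inside the `n`-th pre-Cantor set has length at most `(1/3)^n`. -/
lemma brouwer_preCantorSet_len : ∀ n : ℕ, ∀ x y : ℝ, x ≤ y →
    Icc x y ⊆ preCantorSet n → y - x ≤ (1/3 : ℝ)^n := by
  intro n
  induction n with
  | zero =>
    intro x y hxy hsub
    have hx := hsub (left_mem_Icc.2 hxy)
    have hy := hsub (right_mem_Icc.2 hxy)
    simp only [preCantorSet_zero, mem_Icc] at hx hy
    simp only [pow_zero]
    linarith [hx.1, hy.2]
  | succ n ih =>
    intro x y hxy hsub
    have him1 : ∀ t : ℝ, t ∈ (· / 3) '' preCantorSet n → 0 ≤ t ∧ t ≤ 1/3 := by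
      rintro t ⟨a, ha, rfl⟩
      have := brouwer_preCantorSet_subset n ha
      simp only [mem_Icc] at this
      constructor <;> linarith [this.1, this.2]
    have him2 : ∀ t : ℝ, t ∈ (fun x : ℝ => (2 + x) / 3) '' preCantorSet n → 2/3 ≤ t := by
      rintro t ⟨a, ha, rfl⟩
      have := brouwer_preCantorSet_subset n ha
      simp only [mem_Icc] at this
      linarith [this.1]
    have hx := hsub (left_mem_Icc.2 hxy)
    rw [preCantorSet_succ] at hsub
    have hpow : ((1:ℝ)/3)^(n+1) = (1/3)^n * (1/3) := pow_succ _ _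
    rcases hx with hx1 | hx2
    · -- everything is in the left copy
      have hall : ∀ t, t ∈ Icc x y → t ∈ (· / 3) '' preCantorSet n := by
        intro t ht
        rcases hsub ht with h | h
        · exact h
        · exfalso
          have h1 : x ≤ 1/3 := (him1 x hx1).2
          have h2 : 2/3 ≤ t := him2 t h
          have hmem : (1/2 : ℝ) ∈ Icc x y := ⟨by linarith, by linarith [ht.2]⟩
          rcases hsub hmem with hh | hh
          · linarith [(him1 _ hh).2]
          · linarith [him2 _ hh]
      have hsub3 : Icc (3*x) (3*y) ⊆ preCantorSet n := by
        intro t ht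
        have htm : t/3 ∈ Icc x y := ⟨by linarith [ht.1], by linarith [ht.2]⟩
        obtain ⟨a, ha, ha2⟩ := hall _ htm
        have : a = t := by field_simp at ha2; linarith
        rwa [this] at ha
      have := ih (3*x) (3*y) (by linarith) hsub3
      rw [hpow]; linarith
    · -- everything is in the right copy
      have hx23 : 2/3 ≤ x := him2 x hx2
      have hall : ∀ t, t ∈ Icc x y → t ∈ (fun x : ℝ => (2 + x) / 3) '' preCantorSet n := by
        intro t ht
        rcases hsub ht with h | h
        · exfalso
          have := (him1 t h).2
          linarith [ht.1]
        · exact h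
      have hsub3 : Icc (3*x - 2) (3*y - 2) ⊆ preCantorSet n := by
        intro t ht
        have htm : (2 + t)/3 ∈ Icc x y := ⟨by linarith [ht.1], by linarith [ht.2]⟩
        obtain ⟨a, ha, ha2⟩ := hall _ htm
        have : a = t := by field_simp at ha2; linarith
        rwa [this] at ha
      have := ih (3*x - 2) (3*y - 2) (by linarith) hsub3
      rw [hpow]; linarith

lemma brouwer_isTotallyDisconnected_cantorSet : IsTotallyDisconnected cantorSet := by
  intro t hts hpre x hx y hy
  have key : ∀ a b : ℝ, a ∈ t → b ∈ t → a ≤ b → a = b := by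
    intro a b ha hb hab
    by_contra hne
    have hlt : 0 < b - a := by
      rcases lt_or_eq_of_le hab with h | h
      · linarith
      · exact absurd h hne
    obtain ⟨n, hn⟩ := exists_pow_lt_of_lt_one hlt (by norm_num : (1/3 : ℝ) < 1)
    have hIcc : Icc a b ⊆ preCantorSet n := fun z hz =>
      mem_iInter.1 (hts (hpre.Icc_subset ha hb hz)) n
    have := brouwer_preCantorSet_len n a b hab hIcc
    linarith
  rcases le_total x y with h | h
  · exact key x y hx hy h
  · exact (key y x hy hx h).symm

lemma brouwer_one_mem_cantorSet : (1:ℝ) ∈ cantorSet := by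
  rw [cantorSet, mem_iInter]
  intro n
  induction n with
  | zero => simp
  | succ n ih => exact Or.inr ⟨1, ih, by norm_num⟩

lemma brouwer_cantorSet_div3 {x : ℝ} (hx : x ∈ cantorSet) :
    x/3 ∈ cantorSet ∧ (2+x)/3 ∈ cantorSet := by
  have hmem : ∀ n, x ∈ preCantorSet n := fun n => mem_iInter.1 hx n
  have h01 := cantorSet_subset_unitInterval hx
  simp only [mem_Icc] at h01
  constructor <;> (rw [cantorSet, mem_iInter]; intro n; cases n with
    | zero => simp only [preCantorSet_zero, mem_Icc]; constructor <;> linarith [h01.1, h01.2]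
    | succ n => ?_)
  · exact Or.inl ⟨x, hmem n, rfl⟩
  · exact Or.inr ⟨x, hmem n, rfl⟩

lemma brouwer_cantorSet_cases {x : ℝ} (hx : x ∈ cantorSet) :
    (∃ y ∈ cantorSet, x = y/3) ∨ (∃ y ∈ cantorSet, x = (2+y)/3) := by
  have hmem : ∀ n, x ∈ preCantorSet (n+1) := fun n => mem_iInter.1 hx (n+1)
  by_cases hhalf : x ≤ 1/2
  · left
    refine ⟨3*x, ?_, by ring⟩
    rw [cantorSet, mem_iInter]
    intro n
    rcases hmem n with ⟨a, ha, ha2⟩ | ⟨a, ha, ha2⟩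
    · have : a = 3*x := by field_simp at ha2; linarith
      rwa [this] at ha
    · exfalso
      have := (brouwer_preCantorSet_subset n ha).1
      simp only at ha2
      linarith
  · right
    refine ⟨3*x - 2, ?_, by ring⟩
    rw [cantorSet, mem_iInter]
    intro n
    rcases hmem n with ⟨a, ha, ha2⟩ | ⟨a, ha, ha2⟩
    · exfalso
      have := (brouwer_preCantorSet_subset n ha).2
      simp only at ha2
      linarith
    · have : a = 3*x - 2 := by field_simp at ha2; linarith
      rwa [this] at ha

lemma brouwer_cantorSet_approx : ∀ n : ℕ, ∀ x ∈ cantorSet,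
    ∃ y ∈ cantorSet, y ≠ x ∧ |y - x| ≤ (1/3 : ℝ)^n := by
  intro n
  induction n with
  | zero =>
    intro x hx
    have h01 := cantorSet_subset_unitInterval hx
    simp only [mem_Icc] at h01
    by_cases h : x = 0
    · exact ⟨1, brouwer_one_mem_cantorSet, by rw [h]; norm_num, by rw [h]; norm_num⟩
    · refine ⟨0, zero_mem_cantorSet, fun hc => h hc.symm, ?_⟩
      rw [abs_sub_comm, abs_of_nonneg (by linarith [h01.1])]
      simpa using h01.2
  | succ n ih =>
    intro x hx
    rcases brouwer_cantorSet_cases hx with ⟨y, hy, rfl⟩ | ⟨y, hy, rfl⟩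
    · obtain ⟨z, hz, hne, hb⟩ := ih y hy
      refine ⟨z/3, (brouwer_cantorSet_div3 hz).1, fun hc => hne (by linarith), ?_⟩
      have : z/3 - y/3 = (z - y)/3 := by ring
      rw [this, abs_div, abs_of_pos (by norm_num : (0:ℝ) < 3), pow_succ]
      linarith [hb]
    · obtain ⟨z, hz, hne, hb⟩ := ih y hy
      refine ⟨(2+z)/3, (brouwer_cantorSet_div3 hz).2, fun hc => hne (by linarith), ?_⟩
      have : (2+z)/3 - (2+y)/3 = (z - y)/3 := by ring
      rw [this, abs_div, abs_of_pos (by norm_num : (0:ℝ) < 3), pow_succ]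
      linarith [hb]

instance : CompactSpace ↥cantorSet := isCompact_iff_compactSpace.mp isCompact_cantorSet

instance : Nonempty ↥cantorSet := ⟨⟨0, zero_mem_cantorSet⟩⟩

instance : TotallyDisconnectedSpace ↥cantorSet :=
  totallyDisconnectedSpace_subtype_iff.2 brouwer_isTotallyDisconnected_cantorSet

instance : PerfectSpace ↥cantorSet := by
  rw [perfectSpace_iff_forall_not_isolated]
  intro x
  rw [← mem_closure_iff_nhdsWithin_neBot]
  rw [Metric.mem_closure_iff]
  intro ε hε
  obtain ⟨n, hn⟩ := exists_pow_lt_of_lt_one hε (by norm_num : (1/3:ℝ) < 1)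
  obtain ⟨y, hy, hne, hb⟩ := brouwer_cantorSet_approx n x.1 x.2
  refine ⟨⟨y, hy⟩, fun hc => hne (congrArg Subtype.val hc), ?_⟩
  rw [Subtype.dist_eq, Real.dist_eq, abs_sub_comm]
  calc |y - (x:ℝ)| ≤ (1/3:ℝ)^n := hb
    _ < ε := hn

theorem brouwer_homeo_aux (X : Type*) [TopologicalSpace X] [Nonempty X]
    [CompactSpace X] [TopologicalSpace.MetrizableSpace X] [TotallyDisconnectedSpace X]
    [PerfectSpace X] : Nonempty ((ℕ → Bool) ≃ₜ X) := by
  letI : MetricSpace X := TopologicalSpace.metrizableSpaceMetric X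
  exact ⟨brouwerHomeoCantorSpace (X := X)⟩

/-- **Brouwer's Theorem.** Every nonempty compact, metrizable, totally disconnected and
perfect topological space is homeomorphic to the middle-thirds Cantor set. -/
theorem brouwer_homeomorph_cantorSet (X : Type*) [TopologicalSpace X] [Nonempty X]
    [CompactSpace X] [TopologicalSpace.MetrizableSpace X] [TotallyDisconnectedSpace X]
    [PerfectSpace X] :
    Nonempty (X ≃ₜ ↥cantorSet) := by
  obtain ⟨e1⟩ := brouwer_homeo_aux X
  obtain ⟨e2⟩ := brouwer_homeo_aux ↥cantorSet
  exact ⟨e1.symm.trans e2⟩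
end

section
/- Let p be a prime and let S be a finite nontrivial subtree of the complete p-ary tree T_p that is a tile of some tiling of T_p, i.e., there exists a set Ω of words such that every edge of T_p is, in a unique way, the translate by an element of Ω of an edge of S. Then S contains the empty word (S is rooted at ε) and S is closed under prefixes: if v ∈ S and w is a prefix of v, then w ∈ S. -/
/-- `S` is a tile of a tiling of the complete `p`-ary tree with translate set `Ω`:
every edge `(w, w ++ [c])` of the tree can be written uniquely as
`(ω ++ v, ω ++ v ++ [c])` with `ω ∈ Ω`, `v ∈ S` and `v ++ [c] ∈ S`. -/
def IsTile (p : ℕ) (S Ω : Set (List (Fin p))) : Prop :=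
  ∀ (w : List (Fin p)) (c : Fin p),
    ∃! ωv : List (Fin p) × List (Fin p),
      ωv.1 ∈ Ω ∧ ωv.2 ∈ S ∧ ωv.2 ++ [c] ∈ S ∧ w = ωv.1 ++ ωv.2

/-- Two words are adjacent vertices of the subtree induced by `S` if both lie in `S`
and one is obtained from the other by appending a single character. -/
def AdjIn (p : ℕ) (S : Set (List (Fin p))) (a b : List (Fin p)) : Prop :=
  a ∈ S ∧ b ∈ S ∧ ((∃ c : Fin p, b = a ++ [c]) ∨ (∃ c : Fin p, a = b ++ [c]))

lemma prefix_snoc {α : Type*} {w a : List α} {c : α} (h : w <+: a ++ [c]) :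
    w <+: a ∨ w = a ++ [c] := by
  rcases h with ⟨t, ht⟩
  rcases t.eq_nil_or_concat with rfl | ⟨t', d, rfl⟩
  · right; simpa using ht
  · left
    rw [List.concat_eq_append, ← List.append_assoc] at ht
    have := List.append_inj' ht rfl
    exact ⟨t', this.1⟩

/-- A tile of a tiling of the complete `p`-ary tree (a nontrivial finite connected
subtree) is rooted at the empty word and closed under prefixes. -/
theorem tile_contains_root_and_prefix_closed (p : ℕ) [Fact p.Prime]
    (S : Set (List (Fin p))) (hfin : S.Finite)
    (hconn : ∀ v ∈ S, ∀ w ∈ S, Relation.ReflTransGen (AdjIn p S) v w)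
    (hnontriv : ∃ v ∈ S, ∃ w ∈ S, v ≠ w)
    (Ω : Set (List (Fin p))) (htile : IsTile p S Ω) :
    ([] : List (Fin p)) ∈ S ∧ ∀ v ∈ S, ∀ w : List (Fin p), w <+: v → w ∈ S := by
  have hp : 0 < p := (Fact.out : p.Prime).pos
  -- [] ∈ S
  obtain ⟨ωv, ⟨-, hv, -, heq⟩, -⟩ := htile [] ⟨0, hp⟩
  have h2 : ωv.2 = [] := (List.append_eq_nil_iff.mp heq.symm).2
  rw [h2] at hv
  refine ⟨hv, ?_⟩
  -- prefix closure via connectivity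
  intro v hvS
  have hwalk := hconn [] hv v hvS
  have key : ∀ w, w <+: v → w ∈ S := by
    clear hvS
    induction hwalk with
    | refl => intro w hw; rwa [List.prefix_nil.mp hw]
    | tail _ hadj ih =>
      rename_i b c _
      obtain ⟨hb, hc, hcase⟩ := hadj
      rcases hcase with ⟨d, rfl⟩ | ⟨d, rfl⟩
      · intro w hw
        rcases prefix_snoc hw with h | rfl
        · exact ih w h
        · exact hc
      · intro w hw
        exact ih w (hw.trans ⟨[d], rfl⟩)
  exact key
end

section
/- Let p be a prime and let S be a nontrivial finite set of words over {0, …, p−1} that contains the empty word and is closed under prefixes (a nontrivial finite subtree of T_p rooted at ε). Then the following are equivalent: (a) the p-adic balls {B_ℓ : ℓ ∈ L(S)} corresponding to the leaves of S form a partition of ℤ_p; (b) for every word w there is a leaf ℓ ∈ L(S) such that w is a prefix of ℓ or ℓ is a prefix of w; (c) for every word w, either w ∈ S \ L(S) or there is a leaf ℓ ∈ L(S) that is a prefix of w; (d) for every word w, either w ∈ S or there is a leaf ℓ ∈ L(S) that is a prefix of w. -/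
/-- `ν(w) = Σ_{k<n} a_k p^k` for a word `w = [a₀, …, a_{n-1}]` over `{0, …, p-1}`. -/
def wordVal (p : ℕ) (w : List (Fin p)) : ℕ :=
  w.foldr (fun a acc => a.val + p * acc) 0

/-- The `p`-adic ball `B_w = {x ∈ ℤ_p : ‖x − ν(w)‖ ≤ p^{−n}}` associated to a word `w`
of length `n`. -/
def padicBall (p : ℕ) [Fact p.Prime] (w : List (Fin p)) : Set ℤ_[p] :=
  {x : ℤ_[p] | ‖x - (wordVal p w : ℤ_[p])‖ ≤ (p : ℝ) ^ (-(w.length : ℤ))}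

/-- The leaves of a set `S` of words: elements of `S` none of whose children lies
in `S`. -/
def leaves (p : ℕ) (S : Set (List (Fin p))) : Set (List (Fin p)) :=
  {s ∈ S | ∀ c : Fin p, s ++ [c] ∉ S}

/-- The balls indexed by the words of `W` form a partition of `ℤ_p`: they are nonempty,
pairwise disjoint and cover `ℤ_p`. -/
def IsBallPartition (p : ℕ) [Fact p.Prime] (W : Set (List (Fin p))) : Prop :=
  (∀ w ∈ W, (padicBall p w).Nonempty) ∧
  (∀ v ∈ W, ∀ w ∈ W, v ≠ w → Disjoint (padicBall p v) (padicBall p w)) ∧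
  (⋃ w ∈ W, padicBall p w) = Set.univ


section Aux

variable {p : ℕ} [Fact p.Prime]

lemma wordVal_append (v w : List (Fin p)) :
    wordVal p (v ++ w) = wordVal p v + p ^ v.length * wordVal p w := by
  induction v with
  | nil => simp [wordVal]
  | cons a v ih =>
      show (a.val + p * wordVal p (v ++ w))
          = (a.val + p * wordVal p v) + p ^ (v.length + 1) * wordVal p w
      rw [ih]; ring

lemma mem_padicBall_iff (w : List (Fin p)) (x : ℤ_[p]) :
    x ∈ padicBall p w ↔ (p : ℤ_[p]) ^ w.length ∣ (x - (wordVal p w : ℤ_[p])) := by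
  rw [padicBall, Set.mem_setOf_eq, PadicInt.norm_le_pow_iff_mem_span_pow,
    Ideal.mem_span_singleton]

lemma dvd_int_of_mem_balls {v w : List (Fin p)} {x : ℤ_[p]}
    (hle : v.length ≤ w.length) (hv : x ∈ padicBall p v) (hw : x ∈ padicBall p w) :
    (p : ℤ) ^ v.length ∣ ((wordVal p w : ℤ) - (wordVal p v : ℤ)) := by
  rw [mem_padicBall_iff] at hv hw
  rw [← PadicInt.norm_int_le_pow_iff_dvd, PadicInt.norm_le_pow_iff_mem_span_pow,
    Ideal.mem_span_singleton]
  push_cast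
  have : ((wordVal p w : ℤ_[p]) - (wordVal p v : ℤ_[p]))
      = (x - (wordVal p v : ℤ_[p])) - (x - (wordVal p w : ℤ_[p])) := by ring
  rw [this]
  exact dvd_sub hv (dvd_trans (pow_dvd_pow _ hle) hw)

lemma prefix_of_dvd : ∀ (v w : List (Fin p)), v.length ≤ w.length →
    (p : ℤ) ^ v.length ∣ ((wordVal p w : ℤ) - (wordVal p v : ℤ)) → v <+: w := by
  intro v
  induction v with
  | nil => intro w _ _; exact List.nil_prefix
  | cons a v ih =>
      intro w hle hdvd
      match w with
      | [] => simp at hle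
      | b :: w =>
        have hp : 0 < p := (Fact.out : p.Prime).pos
        have hval : ∀ u : List (Fin p), ∀ c : Fin p,
            (wordVal p (c :: u) : ℤ) = c.val + p * wordVal p u := by
          intro u c; show ((c.val + p * wordVal p u : ℕ) : ℤ) = _; push_cast; ring
        rw [hval, hval] at hdvd
        simp only [List.length_cons] at hle hdvd
        have hpd : (p : ℤ) ∣ ((b.val : ℤ) - (a.val : ℤ)) := by
          have h1 : (p : ℤ) ∣ (p : ℤ) ^ (v.length + 1) := dvd_pow_self _ (by omega)
          have h2 : (p : ℤ) ∣ (((b.val : ℤ) + p * wordVal p w) - ((a.val : ℤ) + p * wordVal p v)) :=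
            h1.trans hdvd
          have h3 : (p : ℤ) ∣ (p * (wordVal p w : ℤ) - p * (wordVal p v : ℤ)) := by
            exact dvd_sub (Dvd.intro _ rfl) (Dvd.intro _ rfl)
          have := dvd_sub h2 h3
          convert this using 1
          · rfl
          · ring
        have hab : (b.val : ℤ) - (a.val : ℤ) = 0 := by
          refine Int.eq_zero_of_abs_lt_dvd hpd ?_
          have := a.isLt; have := b.isLt
          rw [abs_lt]; omega
        have hab' : a = b := by
          apply Fin.ext; omega
        subst hab'
        have hdvd' : (p : ℤ) ^ v.length ∣ ((wordVal p w : ℤ) - (wordVal p v : ℤ)) := by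
          have : (p : ℤ) ^ (v.length + 1) ∣ p * ((wordVal p w : ℤ) - (wordVal p v : ℤ)) := by
            convert hdvd using 1; ring
          rw [pow_succ'] at this
          exact (mul_dvd_mul_iff_left (by exact_mod_cast hp.ne' : (p : ℤ) ≠ 0)).mp this
        exact List.cons_prefix_cons.mpr ⟨rfl, ih w (by omega) hdvd'⟩

lemma ball_subset_of_prefix {v w : List (Fin p)} (h : v <+: w) :
    padicBall p w ⊆ padicBall p v := by
  intro x hx
  rw [mem_padicBall_iff] at hx ⊢
  obtain ⟨t, rfl⟩ := h
  have hlen : v.length ≤ (v ++ t).length := by simp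
  have h1 : (p : ℤ_[p]) ^ v.length ∣ (x - (wordVal p (v ++ t) : ℤ_[p])) :=
    (pow_dvd_pow _ hlen).trans hx
  have h2 : ((wordVal p (v ++ t) : ℤ_[p]) - (wordVal p v : ℤ_[p]))
      = (p : ℤ_[p]) ^ v.length * (wordVal p t : ℤ_[p]) := by
    rw [wordVal_append]; push_cast; ring
  have h3 : (p : ℤ_[p]) ^ v.length ∣ ((wordVal p (v ++ t) : ℤ_[p]) - (wordVal p v : ℤ_[p])) :=
    ⟨_, h2⟩
  have := dvd_add h1 h3
  convert this using 1; ring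

lemma exists_child {w : List (Fin p)} {x : ℤ_[p]} (hx : x ∈ padicBall p w) :
    ∃ c : Fin p, x ∈ padicBall p (w ++ [c]) := by
  rw [mem_padicBall_iff] at hx
  obtain ⟨y, hy⟩ := hx
  have hp : 0 < p := (Fact.out : p.Prime).pos
  have hlt : y.appr 1 < p := by simpa using y.appr_lt 1
  refine ⟨⟨y.appr 1, hlt⟩, ?_⟩
  rw [mem_padicBall_iff]
  have hspec := y.appr_spec 1
  rw [Ideal.mem_span_singleton, pow_one] at hspec
  obtain ⟨z, hz⟩ := hspec
  have hval : (wordVal p (w ++ [⟨y.appr 1, hlt⟩]) : ℤ_[p])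
      = (wordVal p w : ℤ_[p]) + (p : ℤ_[p]) ^ w.length * (y.appr 1 : ℤ_[p]) := by
    rw [wordVal_append]
    show ((wordVal p w + p ^ w.length * (y.appr 1 + p * 0) : ℕ) : ℤ_[p]) = _
    push_cast; ring
  refine ⟨z, ?_⟩
  simp only [List.length_append, List.length_cons, List.length_nil]
  rw [hval]
  have : x - ((wordVal p w : ℤ_[p]) + (p : ℤ_[p]) ^ w.length * (y.appr 1 : ℤ_[p]))
      = (x - (wordVal p w : ℤ_[p])) - (p : ℤ_[p]) ^ w.length * (y.appr 1 : ℤ_[p]) := by ring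
  rw [this, hy]
  calc (p:ℤ_[p])^w.length * y - (p:ℤ_[p])^w.length * (y.appr 1 : ℤ_[p])
      = (p:ℤ_[p])^w.length * (y - (y.appr 1 : ℤ_[p])) := by ring
    _ = (p:ℤ_[p])^w.length * ((p:ℤ_[p]) * z) := by rw [hz]
    _ = (p:ℤ_[p])^(w.length + (0+1)) * z := by ring

lemma exists_word_len (x : ℤ_[p]) : ∀ n : ℕ, ∃ w : List (Fin p), w.length = n ∧ x ∈ padicBall p w := by
  intro n
  induction n with
  | zero =>
      refine ⟨[], rfl, ?_⟩
      rw [mem_padicBall_iff]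
      simp [wordVal]
  | succ n ih =>
      obtain ⟨w, hlen, hw⟩ := ih
      obtain ⟨c, hc⟩ := exists_child hw
      exact ⟨w ++ [c], by simp [hlen], hc⟩

lemma comparable_of_mem_balls {v w : List (Fin p)} {x : ℤ_[p]}
    (hv : x ∈ padicBall p v) (hw : x ∈ padicBall p w) : v <+: w ∨ w <+: v := by
  rcases le_total v.length w.length with h | h
  · exact Or.inl (prefix_of_dvd v w h (dvd_int_of_mem_balls h hv hw))
  · exact Or.inr (prefix_of_dvd w v h (dvd_int_of_mem_balls h hw hv))

end Aux

/-- For a nontrivial finite subtree `S` of the `p`-ary tree rooted at the empty word, the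
following are equivalent: (a) the balls of the leaves of `S` partition `ℤ_p`; (b) every
word is comparable (for the prefix order) with some leaf; (c) every word is either a
non-leaf vertex of `S` or has a leaf of `S` as a prefix; (d) every word is either a
vertex of `S` or has a leaf of `S` as a prefix. -/
theorem leaves_cover_equivalences (p : ℕ) [Fact p.Prime]
    (S : Set (List (Fin p))) (hfin : S.Finite) (hroot : ([] : List (Fin p)) ∈ S)
    (hpref : ∀ v ∈ S, ∀ w : List (Fin p), w <+: v → w ∈ S)
    (hnontriv : ∃ w ∈ S, w ≠ []) :
    [ IsBallPartition p (leaves p S),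
      ∀ w : List (Fin p), ∃ ℓ ∈ leaves p S, w <+: ℓ ∨ ℓ <+: w,
      ∀ w : List (Fin p), w ∈ S \ leaves p S ∨ ∃ ℓ ∈ leaves p S, ℓ <+: w,
      ∀ w : List (Fin p), w ∈ S ∨ ∃ ℓ ∈ leaves p S, ℓ <+: w ].TFAE := by
  tfae_have 1 → 2 := by
    rintro ⟨-, -, hcover⟩ w
    have hx : (wordVal p w : ℤ_[p]) ∈ padicBall p w := by
      rw [mem_padicBall_iff]; simp
    have hmem : (wordVal p w : ℤ_[p]) ∈ ⋃ ℓ ∈ leaves p S, padicBall p ℓ := by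
      rw [hcover]; trivial
    obtain ⟨ℓ, hℓ, hxℓ⟩ := Set.mem_iUnion₂.mp hmem
    exact ⟨ℓ, hℓ, (comparable_of_mem_balls hxℓ hx).symm⟩
  tfae_have 2 → 3 := by
    intro h2 w
    obtain ⟨ℓ, hℓ, hcomp⟩ := h2 w
    rcases hcomp with hwl | hlw
    · by_cases heq : w = ℓ
      · subst heq; exact Or.inr ⟨w, hℓ, List.prefix_refl w⟩
      · left
        obtain ⟨t, rfl⟩ := hwl
        have ht : t ≠ [] := by rintro rfl; exact heq (by simp)
        obtain ⟨c, t, rfl⟩ := List.exists_cons_of_ne_nil ht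
        refine ⟨hpref _ hℓ.1 w (List.prefix_append _ _), ?_⟩
        intro hwleaf
        exact hwleaf.2 c (hpref _ hℓ.1 (w ++ [c]) ⟨t, by simp⟩)
    · exact Or.inr ⟨ℓ, hℓ, hlw⟩
  tfae_have 3 → 4 := by
    intro h3 w
    rcases h3 w with h | h
    · exact Or.inl h.1
    · exact Or.inr h
  tfae_have 4 → 1 := by
    intro h4
    refine ⟨?_, ?_, ?_⟩
    · intro w _
      exact ⟨(wordVal p w : ℤ_[p]), by rw [mem_padicBall_iff]; simp⟩
    · intro v hv w hw hne
      rw [Set.disjoint_left]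
      intro x hxv hxw
      rcases comparable_of_mem_balls hxv hxw with h | h
      · obtain ⟨t, rfl⟩ := h
        have ht : t ≠ [] := by rintro rfl; exact hne (by simp)
        obtain ⟨c, t, rfl⟩ := List.exists_cons_of_ne_nil ht
        exact hv.2 c (hpref _ hw.1 (v ++ [c]) ⟨t, by simp⟩)
      · obtain ⟨t, rfl⟩ := h
        have ht : t ≠ [] := by rintro rfl; exact hne (by simp)
        obtain ⟨c, t, rfl⟩ := List.exists_cons_of_ne_nil ht
        exact hw.2 c (hpref _ hv.1 (w ++ [c]) ⟨t, by simp⟩)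
    · rw [Set.eq_univ_iff_forall]
      intro x
      obtain ⟨N, hN⟩ := (hfin.image List.length).bddAbove
      obtain ⟨w, hwlen, hw⟩ := exists_word_len x (N + 1)
      have hwS : w ∉ S := by
        intro hwS
        have hle : w.length ≤ N := hN (Set.mem_image_of_mem _ hwS)
        omega
      rcases h4 w with h | ⟨ℓ, hℓ, hpre⟩
      · exact absurd h hwS
      · exact Set.mem_biUnion hℓ (ball_subset_of_prefix hpre hw)
  tfae_finish
end

section
/- Let p be a prime and let S be a nontrivial finite set of words over {0, …, p−1} that contains the empty word and is closed under prefixes. Then the p-adic balls {B_ℓ : ℓ ∈ L(S)} corresponding to the leaves of S form a partition of ℤ_p if and only if every non-leaf node of S splits completely in S, i.e., for every s ∈ S \ L(S) and every c ∈ Fin p one has s ++ [c] ∈ S. -/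
section Aux

variable {p : ℕ} [hp : Fact p.Prime]

lemma wordVal_cons (a : Fin p) (w : List (Fin p)) :
    wordVal p (a :: w) = a.val + p * wordVal p w := rfl

lemma wordVal_lt (w : List (Fin p)) : wordVal p w < p ^ w.length := by
  induction w with
  | nil => simp [wordVal]
  | cons a t ih =>
    rw [wordVal_cons, List.length_cons, pow_succ']
    have ha := a.isLt
    have h1 : 1 + wordVal p t ≤ p ^ t.length := by omega
    calc a.val + p * wordVal p t < p + p * wordVal p t := by omega
      _ = p * (1 + wordVal p t) := by ring
      _ ≤ p * p ^ t.length := Nat.mul_le_mul_left p h1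

/-- The word of length `n` whose digits are the first `n` base-`p` digits of `m`. -/
def toWord (p : ℕ) [hp : Fact p.Prime] : ℕ → ℕ → List (Fin p)
  | 0, _ => []
  | n + 1, m => ⟨m % p, Nat.mod_lt _ hp.out.pos⟩ :: toWord p n (m / p)

@[simp] lemma length_toWord (n m : ℕ) : (toWord p n m).length = n := by
  induction n generalizing m with
  | zero => rfl
  | succ n ih => simp [toWord, ih]

lemma wordVal_toWord (n m : ℕ) : wordVal p (toWord p n m) = m % p ^ n := by
  induction n generalizing m with
  | zero => simp [toWord, wordVal, Nat.mod_one]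
  | succ n ih =>
    rw [toWord, wordVal_cons, ih, pow_succ', Nat.mod_mul]

lemma toWord_wordVal (w : List (Fin p)) : toWord p w.length (wordVal p w) = w := by
  induction w with
  | nil => rfl
  | cons a t ih =>
    rw [List.length_cons, toWord, wordVal_cons]
    have h1 : (a.val + p * wordVal p t) % p = a.val := by
      rw [Nat.add_mul_mod_self_left, Nat.mod_eq_of_lt a.isLt]
    have h2 : (a.val + p * wordVal p t) / p = wordVal p t := by
      rw [Nat.add_mul_div_left _ _ hp.out.pos, Nat.div_eq_of_lt a.isLt, Nat.zero_add]
    rw [h2, ih]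
    congr 1
    exact Fin.ext h1

lemma toWord_mod (n m : ℕ) : toWord p n (m % p ^ n) = toWord p n m := by
  induction n generalizing m with
  | zero => rfl
  | succ n ih =>
    rw [toWord, toWord]
    have h1 : m % p ^ (n + 1) % p = m % p :=
      Nat.mod_mod_of_dvd m (dvd_pow_self p n.succ_ne_zero)
    have h2 : m % p ^ (n + 1) / p = m / p % p ^ n := by
      rw [pow_succ', Nat.mod_mul_right_div_self]
    rw [h2, ih]
    congr 1
    exact Fin.ext h1

lemma toWord_prefix {k n : ℕ} (h : k ≤ n) (m : ℕ) : toWord p k m <+: toWord p n m := by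
  induction k generalizing n m with
  | zero => exact List.nil_prefix
  | succ k ih =>
    obtain ⟨n, rfl⟩ : ∃ n', n = n' + 1 := ⟨n - 1, by omega⟩
    rw [toWord, toWord]
    exact List.cons_prefix_cons.mpr ⟨rfl, ih (by omega) _⟩

lemma mem_padicBall_iff_dvd (w : List (Fin p)) (x : ℤ_[p]) :
    x ∈ padicBall p w ↔ (p : ℤ_[p]) ^ w.length ∣ x - (wordVal p w : ℤ_[p]) := by
  rw [padicBall, Set.mem_setOf_eq, PadicInt.norm_le_pow_iff_mem_span_pow,
    Ideal.mem_span_singleton]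

lemma padicInt_pow_dvd_intCast (n : ℕ) (k : ℤ) :
    (p : ℤ_[p]) ^ n ∣ (k : ℤ_[p]) ↔ (p : ℤ) ^ n ∣ k := by
  rw [← Ideal.mem_span_singleton, ← PadicInt.norm_le_pow_iff_mem_span_pow,
    PadicInt.norm_int_le_pow_iff_dvd]

lemma mem_padicBall_iff_appr (w : List (Fin p)) (x : ℤ_[p]) :
    x ∈ padicBall p w ↔ x.appr w.length = wordVal p w := by
  set n := w.length with hn
  have hs : (p : ℤ_[p]) ^ n ∣ x - (x.appr n : ℤ_[p]) :=
    Ideal.mem_span_singleton.mp (x.appr_spec n)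
  rw [mem_padicBall_iff_dvd]
  constructor
  · intro h
    have hd : (p : ℤ) ^ n ∣ (x.appr n : ℤ) - (wordVal p w : ℤ) := by
      rw [← padicInt_pow_dvd_intCast]
      have h3 : (((x.appr n : ℤ) - (wordVal p w : ℤ) : ℤ) : ℤ_[p]) =
          (x - (wordVal p w : ℤ_[p])) - (x - (x.appr n : ℤ_[p])) := by push_cast; ring
      rw [h3]
      exact dvd_sub h hs
    have h1 : ((x.appr n : ℤ)) < (p : ℤ) ^ n := by exact_mod_cast x.appr_lt n
    have h2 : ((wordVal p w : ℤ)) < (p : ℤ) ^ n := by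
      have := wordVal_lt w; rw [← hn] at this; exact_mod_cast this
    have hnn : (0 : ℤ) ≤ (x.appr n : ℤ) := Int.natCast_nonneg _
    have hnn2 : (0 : ℤ) ≤ (wordVal p w : ℤ) := Int.natCast_nonneg _
    have habs : |(x.appr n : ℤ) - (wordVal p w : ℤ)| < (p : ℤ) ^ n := by
      rw [abs_lt]; omega
    have := Int.eq_zero_of_abs_lt_dvd hd habs
    omega
  · intro h
    rw [← h]
    exact_mod_cast hs

lemma mem_padicBall_iff_toWord (w : List (Fin p)) (x : ℤ_[p]) :
    x ∈ padicBall p w ↔ w = toWord p w.length (x.appr w.length) := by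
  rw [mem_padicBall_iff_appr]
  constructor
  · intro h
    rw [h, toWord_wordVal]
  · intro h
    have := wordVal_toWord (p := p) w.length (x.appr w.length)
    rw [← h] at this
    rw [this, Nat.mod_eq_of_lt (x.appr_lt _)]

lemma toWord_appr_prefix (x : ℤ_[p]) {m n : ℕ} (h : m ≤ n) :
    toWord p m (x.appr m) <+: toWord p n (x.appr n) := by
  have hmod : x.appr n % p ^ m = x.appr m % p ^ m := by
    have hmono := x.appr_mono h
    obtain ⟨c, hc⟩ := x.dvd_appr_sub_appr m n h
    have hrep : x.appr n = x.appr m + p ^ m * c := by omega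
    rw [hrep, Nat.add_mul_mod_self_left]
  have : toWord p m (x.appr m) = toWord p m (x.appr n) := by
    conv_lhs => rw [← toWord_mod]
    conv_rhs => rw [← toWord_mod]
    rw [hmod]
  rw [this]
  exact toWord_prefix h _

lemma proper_prefix_child {v w : List (Fin p)} (h : v <+: w) (hne : v ≠ w) :
    ∃ c : Fin p, v ++ [c] <+: w := by
  obtain ⟨t, rfl⟩ := h
  cases t with
  | nil => simp at hne
  | cons c t' => exact ⟨c, t', by simp⟩

end Aux

/-- For a nontrivial finite subtree `S` of the `p`-ary tree rooted at the empty word, the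
balls of the leaves of `S` partition `ℤ_p` if and only if every non-leaf node of `S`
splits completely in `S`. -/
theorem leaves_partition_iff_split_completely (p : ℕ) [Fact p.Prime]
    (S : Set (List (Fin p))) (hfin : S.Finite) (hroot : ([] : List (Fin p)) ∈ S)
    (hpref : ∀ v ∈ S, ∀ w : List (Fin p), w <+: v → w ∈ S)
    (hnontriv : ∃ w ∈ S, w ≠ []) :
    IsBallPartition p (leaves p S) ↔
      ∀ s ∈ S \ leaves p S, ∀ c : Fin p, s ++ [c] ∈ S := by
  classical
  have hp := (Fact.out : p.Prime)
  constructor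
  · rintro ⟨-, -, hcover⟩ s ⟨hsS, hsnl⟩ c
    by_contra hc
    -- take x = ν(s ++ [c]) and find the leaf ball containing it
    set m := wordVal p (s ++ [c]) with hm
    have hx : ((m : ℤ_[p]) ∈ ⋃ w ∈ leaves p S, padicBall p w) := hcover ▸ Set.mem_univ _
    obtain ⟨ℓ, hℓ, hxℓ⟩ := Set.mem_iUnion₂.mp hx
    obtain ⟨hℓS, hℓleaf⟩ := hℓ
    -- ℓ = toWord |ℓ| m
    have hdvd : (p : ℤ) ^ ℓ.length ∣ (m : ℤ) - (wordVal p ℓ : ℤ) := by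
      rw [← padicInt_pow_dvd_intCast]
      have h3 : (((m : ℤ) - (wordVal p ℓ : ℤ) : ℤ) : ℤ_[p]) =
          (m : ℤ_[p]) - (wordVal p ℓ : ℤ_[p]) := by push_cast; ring
      rw [h3]
      exact (mem_padicBall_iff_dvd ℓ (m : ℤ_[p])).mp hxℓ
    have hmod : wordVal p ℓ = m % p ^ ℓ.length := by
      have hcongr : (wordVal p ℓ : ℤ) % (p : ℤ) ^ ℓ.length = (m : ℤ) % (p : ℤ) ^ ℓ.length :=
        Int.modEq_iff_dvd.mpr hdvd
      have hlt : (wordVal p ℓ : ℤ) < (p : ℤ) ^ ℓ.length := by exact_mod_cast wordVal_lt ℓ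
      have h0 : (0 : ℤ) ≤ (wordVal p ℓ : ℤ) := Int.natCast_nonneg _
      rw [Int.emod_eq_of_lt h0 hlt] at hcongr
      have hfin2 : (wordVal p ℓ : ℤ) = ((m % p ^ ℓ.length : ℕ) : ℤ) := by
        rw [hcongr]; push_cast; ring
      exact_mod_cast hfin2
    have hℓeq : ℓ = toWord p ℓ.length m := by
      conv_lhs => rw [← toWord_wordVal ℓ]
      rw [hmod, toWord_mod]
    have hsceq : s ++ [c] = toWord p (s.length + 1) m := by
      have := toWord_wordVal (p := p) (s ++ [c])
      simpa [hm] using this.symm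
    -- case analysis on lengths
    rcases le_or_gt ℓ.length (s.length + 1) with hle | hgt
    · have hpre : ℓ <+: s ++ [c] := by
        rw [hℓeq, hsceq]
        exact toWord_prefix hle _
      rcases lt_or_eq_of_le hle with hlt | heq
      · -- ℓ is a prefix of s
        have hlen : ℓ.length ≤ s.length := by omega
        have hpres : ℓ <+: s := by
          have h1 : ℓ = (s ++ [c]).take ℓ.length := List.prefix_iff_eq_take.mp hpre
          rw [List.take_append_of_le_length hlen] at h1
          rw [h1]
          exact List.take_prefix _ _
        rcases eq_or_ne ℓ s with rfl | hne
        · exact hsnl ⟨hsS, hℓleaf⟩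
        · obtain ⟨d, hd⟩ := proper_prefix_child hpres hne
          exact hℓleaf d (hpref s hsS _ hd)
      · -- ℓ = s ++ [c], impossible
        apply hc
        have : ℓ = s ++ [c] := hpre.eq_of_length (by simpa using heq)
        rwa [← this]
    · -- s ++ [c] is a prefix of ℓ, so s ++ [c] ∈ S
      apply hc
      apply hpref ℓ hℓS
      rw [hℓeq, hsceq]
      exact toWord_prefix (by omega) _
  · intro hsplit
    refine ⟨?_, ?_, ?_⟩
    · -- nonemptiness
      intro w _
      refine ⟨(wordVal p w : ℤ_[p]), ?_⟩
      have hppos : (0 : ℝ) < p := by exact_mod_cast hp.pos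
      simp only [padicBall, Set.mem_setOf_eq, sub_self, norm_zero]
      exact (zpow_pos hppos _).le
    · -- disjointness
      have key : ∀ v ∈ leaves p S, ∀ w ∈ leaves p S, v ≠ w → v.length ≤ w.length →
          ∀ x : ℤ_[p], x ∈ padicBall p v → x ∈ padicBall p w → False := by
        rintro v ⟨hvS, hvleaf⟩ w ⟨hwS, -⟩ hne hlen x hxv hxw
        have hv := (mem_padicBall_iff_toWord v x).mp hxv
        have hw := (mem_padicBall_iff_toWord w x).mp hxw
        have hpre : v <+: w := by
          rw [hv, hw]
          exact toWord_appr_prefix x hlen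
        obtain ⟨d, hd⟩ := proper_prefix_child hpre hne
        exact hvleaf d (hpref w hwS _ hd)
      intro v hv w hw hne
      rw [Set.disjoint_left]
      intro x hxv hxw
      rcases le_total v.length w.length with h | h
      · exact key v hv w hw hne h x hxv hxw
      · exact key w hw v hv (Ne.symm hne) h x hxw hxv
    · -- covering
      ext x
      simp only [Set.mem_iUnion, Set.mem_univ, iff_true]
      obtain ⟨N, hN⟩ : ∃ N : ℕ, ∀ w ∈ S, w.length ≤ N := by
        obtain ⟨N, hN⟩ := (hfin.image List.length).bddAbove
        exact ⟨N, fun w hw => hN (Set.mem_image_of_mem _ hw)⟩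
      set P : ℕ → Prop := fun n => toWord p n (x.appr n) ∈ S with hP
      have hP0 : P 0 := hroot
      set n₀ := Nat.findGreatest P N with hn₀
      have hℓS : P n₀ := Nat.findGreatest_spec (Nat.zero_le N) hP0
      refine ⟨toWord p n₀ (x.appr n₀), ⟨hℓS, ?_⟩, ?_⟩
      · -- it is a leaf
        intro c hcS
        -- not a leaf, so it splits completely; hence P (n₀ + 1) holds
        have hnotleaf : toWord p n₀ (x.appr n₀) ∉ leaves p S := by
          intro hleaf
          exact hleaf.2 c hcS
        have hpre : toWord p n₀ (x.appr n₀) <+: toWord p (n₀ + 1) (x.appr (n₀ + 1)) :=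
          toWord_appr_prefix x (Nat.le_succ n₀)
        have hne : toWord p n₀ (x.appr n₀) ≠ toWord p (n₀ + 1) (x.appr (n₀ + 1)) := by
          intro h
          have := congrArg List.length h
          simp at this
        obtain ⟨d, hd⟩ := proper_prefix_child hpre hne
        have hdeq : toWord p n₀ (x.appr n₀) ++ [d] = toWord p (n₀ + 1) (x.appr (n₀ + 1)) :=
          hd.eq_of_length (by simp)
        have hdS : toWord p n₀ (x.appr n₀) ++ [d] ∈ S :=
          hsplit _ ⟨hℓS, hnotleaf⟩ d
        have hPn1 : P (n₀ + 1) := by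
          show toWord p (n₀ + 1) (x.appr (n₀ + 1)) ∈ S
          rw [← hdeq]; exact hdS
        have hlen : n₀ + 1 ≤ N := by
          have := hN _ hdS
          simpa using this
        exact Nat.findGreatest_is_greatest (by omega) hlen hPn1
      · -- x belongs to its ball
        rw [mem_padicBall_iff_toWord]
        simp
end

section
/- Let p be a prime and let S be a nontrivial finite set of words over {0, …, p−1} that contains the empty word and is closed under prefixes. Then the following are equivalent: (1) there exists a set Ω of words such that S is a tile of a tiling of T_p with translate set Ω, i.e., every edge (w, w ++ [c]) of the complete p-ary tree can be written uniquely as (ω ++ v, ω ++ v ++ [c]) with ω ∈ Ω, v ∈ S, v ++ [c] ∈ S; (2) the p-adic balls {B_ℓ : ℓ ∈ L(S)} form a partition of ℤ_p; (3) for every non-leaf s ∈ S and every c ∈ Fin p, s ++ [c] ∈ S. Moreover, if these hold, then Ω may be chosen to be the submonoid of the free monoid of words (under concatenation) generated by the set of leaves L(S). -/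
/-- The submonoid of the free monoid of words generated by the leaves of `S`, viewed as a
set of words. -/
def leafSubmonoid (p : ℕ) (S : Set (List (Fin p))) : Set (List (Fin p)) :=
  {w : List (Fin p) |
    FreeMonoid.ofList w ∈ Submonoid.closure (FreeMonoid.ofList '' leaves p S)}

namespace TileAux

variable {p : ℕ}

theorem wordVal_nil : wordVal p [] = 0 := rfl

theorem wordVal_cons (a : Fin p) (w : List (Fin p)) :
    wordVal p (a :: w) = a.val + p * wordVal p w := rfl

theorem wordVal_append (u v : List (Fin p)) :
    wordVal p (u ++ v) = wordVal p u + p ^ u.length * wordVal p v := by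
  induction u with
  | nil => simp [wordVal_nil]
  | cons a u ih =>
    simp only [List.cons_append, wordVal_cons, ih, List.length_cons, pow_succ]
    ring

theorem wordVal_lt (w : List (Fin p)) : wordVal p w < p ^ w.length := by
  induction w with
  | nil => simp [wordVal_nil]
  | cons a w ih =>
    have ha := a.isLt
    have h2 : p * (wordVal p w + 1) ≤ p * p ^ w.length :=
      Nat.mul_le_mul le_rfl (Nat.succ_le_of_lt ih)
    rw [Nat.mul_add, mul_one] at h2
    simp only [wordVal_cons, List.length_cons, pow_succ']
    omega

theorem wordVal_inj : ∀ u v : List (Fin p), u.length = v.length →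
    wordVal p u = wordVal p v → u = v
  | [], [], _, _ => rfl
  | [], _ :: _, hl, _ => by simp at hl
  | _ :: _, [], hl, _ => by simp at hl
  | a :: u, b :: v, hl, hv => by
    have ha := a.isLt
    have hb := b.isLt
    have hp : 0 < p := lt_of_le_of_lt (Nat.zero_le _) ha
    rw [wordVal_cons, wordVal_cons] at hv
    have h1 : a.val = b.val := by
      have := congrArg (· % p) hv
      simpa [Nat.add_mul_mod_self_left, Nat.mod_eq_of_lt ha, Nat.mod_eq_of_lt hb] using this
    rw [h1] at hv
    have h2 := Nat.eq_of_mul_eq_mul_left hp (Nat.add_left_cancel hv)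
    obtain rfl : u = v := wordVal_inj u v (by simpa using hl) h2
    obtain rfl : a = b := Fin.ext h1
    rfl

variable [Fact p.Prime]

theorem mem_padicBall_iff {w : List (Fin p)} {x : ℤ_[p]} :
    x ∈ padicBall p w ↔ (p : ℤ_[p]) ^ w.length ∣ (x - (wordVal p w : ℤ_[p])) := by
  rw [padicBall, Set.mem_setOf_eq, PadicInt.norm_le_pow_iff_mem_span_pow,
    Ideal.mem_span_singleton]

theorem self_mem_padicBall (w : List (Fin p)) :
    ((wordVal p w : ℤ_[p])) ∈ padicBall p w :=
  mem_padicBall_iff.mpr (by simp)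

theorem mem_padicBall_nil (x : ℤ_[p]) : x ∈ padicBall p [] :=
  mem_padicBall_iff.mpr (by simp)

theorem prefix_of_mem_of_le {v w : List (Fin p)} {x : ℤ_[p]}
    (hv : x ∈ padicBall p v) (hw : x ∈ padicBall p w) (hl : v.length ≤ w.length) :
    v <+: w := by
  rw [mem_padicBall_iff] at hv hw
  set k := v.length with hk
  have h1 : (p : ℤ_[p]) ^ k ∣ (x - (wordVal p w : ℤ_[p])) :=
    dvd_trans (pow_dvd_pow _ hl) hw
  have h2 : (p : ℤ_[p]) ^ k ∣ ((wordVal p w : ℤ_[p]) - (wordVal p v : ℤ_[p])) := by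
    have h3 := dvd_sub hv h1
    rwa [show (x - (wordVal p v : ℤ_[p])) - (x - (wordVal p w : ℤ_[p]))
        = (wordVal p w : ℤ_[p]) - (wordVal p v : ℤ_[p]) from by ring] at h3
  have h4 : (p : ℤ_[p]) ^ k ∣ (((wordVal p w : ℤ) - (wordVal p v : ℤ) : ℤ) : ℤ_[p]) := by
    push_cast
    exact h2
  have h5 : ((p ^ k : ℤ)) ∣ ((wordVal p w : ℤ) - (wordVal p v : ℤ)) :=
    (PadicInt.pow_p_dvd_int_iff _ _).mp h4
  have hmod : wordVal p v ≡ wordVal p w [MOD p ^ k] := by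
    rw [Nat.modEq_iff_dvd]
    exact_mod_cast h5
  have hlen : (w.take k).length = k := by
    rw [List.length_take]
    omega
  have htake : wordVal p w % p ^ k = wordVal p (w.take k) := by
    conv_lhs => rw [← List.take_append_drop k w, wordVal_append, hlen]
    rw [Nat.add_mul_mod_self_left]
    have h6 := wordVal_lt (w.take k)
    rw [hlen] at h6
    exact Nat.mod_eq_of_lt h6
  have hvlt : wordVal p v < p ^ k := wordVal_lt v
  have heq : wordVal p v = wordVal p (w.take k) := by
    have := hmod
    unfold Nat.ModEq at this
    rw [htake, Nat.mod_eq_of_lt hvlt] at this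
    exact this
  have : v = w.take k := wordVal_inj _ _ (by rw [hlen]) heq
  rw [this]
  exact List.take_prefix k w

theorem comparable_of_mem {v w : List (Fin p)} {x : ℤ_[p]}
    (hv : x ∈ padicBall p v) (hw : x ∈ padicBall p w) : v <+: w ∨ w <+: v := by
  rcases le_total v.length w.length with h | h
  · exact Or.inl (prefix_of_mem_of_le hv hw h)
  · exact Or.inr (prefix_of_mem_of_le hw hv h)

theorem exists_child {w : List (Fin p)} {x : ℤ_[p]} (hx : x ∈ padicBall p w) :
    ∃ c : Fin p, x ∈ padicBall p (w ++ [c]) := by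
  have hp : 0 < p := (Fact.out : p.Prime).pos
  rw [mem_padicBall_iff] at hx
  obtain ⟨y, hy⟩ := hx
  have hlt : y.appr 1 < p := by simpa using y.appr_lt 1
  refine ⟨⟨y.appr 1, hlt⟩, ?_⟩
  rw [mem_padicBall_iff]
  have hspec := y.appr_spec 1
  rw [Ideal.mem_span_singleton, pow_one] at hspec
  obtain ⟨z, hz⟩ := hspec
  have hval : wordVal p (w ++ [(⟨y.appr 1, hlt⟩ : Fin p)])
      = wordVal p w + p ^ w.length * y.appr 1 := by
    rw [wordVal_append]
    simp [wordVal_cons, wordVal_nil]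
  refine ⟨z, ?_⟩
  rw [hval, List.length_append]
  push_cast
  simp only [List.length_cons, List.length_nil, zero_add, pow_succ]
  linear_combination hy + (p : ℤ_[p]) ^ w.length * hz

/-! ### Combinatorial lemmas -/

theorem exists_snoc_prefix {α : Type*} {u v : List α} (h : u <+: v) (hne : u ≠ v) :
    ∃ c, u ++ [c] <+: v := by
  obtain ⟨t, rfl⟩ := h
  cases t with
  | nil => simp at hne
  | cons c t => exact ⟨c, t, by simp⟩

end TileAux

namespace TileAux

section Comb

variable {p : ℕ} {S : Set (List (Fin p))}

theorem mem_leafSubmonoid_iff {w : List (Fin p)} :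
    w ∈ leafSubmonoid p S ↔
      ∃ L : List (List (Fin p)), (∀ u ∈ L, u ∈ leaves p S) ∧ L.flatten = w := by
  constructor
  · intro hw
    have hw' : FreeMonoid.ofList w ∈ Submonoid.closure (FreeMonoid.ofList '' leaves p S) := hw
    obtain ⟨l, hl, hprod⟩ := Submonoid.exists_list_of_mem_closure hw'
    refine ⟨l.map FreeMonoid.toList, ?_, ?_⟩
    · intro u hu
      obtain ⟨y, hy, rfl⟩ := List.mem_map.mp hu
      obtain ⟨u', hu', rfl⟩ := hl y hy
      exact hu'
    · have := congrArg FreeMonoid.toList hprod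
      rw [FreeMonoid.toList_prod] at this
      simpa using this
  · rintro ⟨L, hL, rfl⟩
    show FreeMonoid.ofList L.flatten ∈ Submonoid.closure (FreeMonoid.ofList '' leaves p S)
    rw [FreeMonoid.ofList_flatten]
    refine Submonoid.list_prod_mem _ ?_
    intro x hx
    obtain ⟨u, hu, rfl⟩ := List.mem_map.mp hx
    exact Submonoid.subset_closure ⟨u, hL u hu, rfl⟩

theorem nil_mem_leafSubmonoid : ([] : List (Fin p)) ∈ leafSubmonoid p S :=
  mem_leafSubmonoid_iff.mpr ⟨[], by simp, rfl⟩

theorem leaf_mem_leafSubmonoid {u : List (Fin p)} (hu : u ∈ leaves p S) :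
    u ∈ leafSubmonoid p S :=
  mem_leafSubmonoid_iff.mpr ⟨[u], by simpa using hu, by simp⟩

theorem append_mem_leafSubmonoid {a b : List (Fin p)} (ha : a ∈ leafSubmonoid p S)
    (hb : b ∈ leafSubmonoid p S) : a ++ b ∈ leafSubmonoid p S := by
  obtain ⟨La, hLa, rfl⟩ := mem_leafSubmonoid_iff.mp ha
  obtain ⟨Lb, hLb, rfl⟩ := mem_leafSubmonoid_iff.mp hb
  refine mem_leafSubmonoid_iff.mpr ⟨La ++ Lb, ?_, by simp⟩
  intro u hu
  rcases List.mem_append.mp hu with h | h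
  · exact hLa u h
  · exact hLb u h

theorem leafSubmonoid_destruct {w : List (Fin p)} (hw : w ∈ leafSubmonoid p S) :
    w = [] ∨ ∃ u ∈ leaves p S, ∃ r ∈ leafSubmonoid p S, w = u ++ r := by
  obtain ⟨L, hL, rfl⟩ := mem_leafSubmonoid_iff.mp hw
  cases L with
  | nil => exact Or.inl rfl
  | cons u L =>
    refine Or.inr ⟨u, hL u (by simp), L.flatten,
      mem_leafSubmonoid_iff.mpr ⟨L, fun v hv => hL v (by simp [hv]), rfl⟩, by simp⟩

variable (hroot : ([] : List (Fin p)) ∈ S)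
variable (hpref : ∀ v ∈ S, ∀ w : List (Fin p), w <+: v → w ∈ S)
variable (hnontriv : ∃ w ∈ S, w ≠ [])
variable (hfull : ∀ s ∈ S \ leaves p S, ∀ c : Fin p, s ++ [c] ∈ S)

include hpref hnontriv in
theorem nil_not_leaf : ([] : List (Fin p)) ∉ leaves p S := by
  obtain ⟨w, hw, hne⟩ := hnontriv
  cases w with
  | nil => exact absurd rfl hne
  | cons a t =>
    intro h
    exact h.2 a (by simpa using hpref (a :: t) hw [a] ⟨t, rfl⟩)

include hpref in
theorem leaf_not_prefix {u v : List (Fin p)} (hu : u ∈ leaves p S) (hv : v ∈ S)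
    (hvnl : v ∉ leaves p S) (h : u <+: v) : False := by
  have hne : u ≠ v := fun h' => hvnl (h' ▸ hu)
  obtain ⟨c, hc⟩ := exists_snoc_prefix h hne
  exact hu.2 c (hpref v hv _ hc)

include hpref in
theorem leaves_antichain {u v : List (Fin p)} (hu : u ∈ leaves p S) (hv : v ∈ leaves p S)
    (h : u <+: v) : u = v := by
  by_contra hne
  obtain ⟨c, hc⟩ := exists_snoc_prefix h hne
  exact hu.2 c (hpref v hv.1 _ hc)

include hroot hfull in
theorem mem_of_no_leaf_prefix :
    ∀ w : List (Fin p), (∀ u, u <+: w → u ∉ leaves p S) → w ∈ S := by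
  intro w
  induction w using List.reverseRecOn with
  | nil => intro _; exact hroot
  | append_singleton t c ih =>
    intro h
    have ht : t ∈ S := ih (fun u hu => h u (hu.trans (t.prefix_append [c])))
    exact hfull t ⟨ht, h t (t.prefix_append [c])⟩ c

include hroot hpref hnontriv hfull in
theorem exists_decomp (w : List (Fin p)) :
    ∃ ω v, ω ∈ leafSubmonoid p S ∧ v ∈ S ∧ v ∉ leaves p S ∧ w = ω ++ v := by
  have key : ∀ n (w : List (Fin p)), w.length ≤ n →
      ∃ ω v, ω ∈ leafSubmonoid p S ∧ v ∈ S ∧ v ∉ leaves p S ∧ w = ω ++ v := by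
    intro n
    induction n with
    | zero =>
      intro w hw
      obtain rfl : w = [] := List.length_eq_zero_iff.mp (Nat.le_zero.mp hw)
      exact ⟨[], [], nil_mem_leafSubmonoid, hroot, nil_not_leaf hpref hnontriv, rfl⟩
    | succ n ih =>
      intro w hw
      by_cases h : ∃ u, u <+: w ∧ u ∈ leaves p S
      · obtain ⟨u, hu, hul⟩ := h
        have hune : u ≠ [] := fun h' => nil_not_leaf hpref hnontriv (h' ▸ hul)
        obtain ⟨t, rfl⟩ := hu
        have hlt : t.length ≤ n := by
          have : 0 < u.length := List.length_pos_iff.mpr hune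
          rw [List.length_append] at hw
          omega
        obtain ⟨ω, v, hω, hv, hvnl, rfl⟩ := ih t hlt
        exact ⟨u ++ ω, v, append_mem_leafSubmonoid (leaf_mem_leafSubmonoid hul) hω,
          hv, hvnl, by rw [List.append_assoc]⟩
      · push_neg at h
        have hwS : w ∈ S := mem_of_no_leaf_prefix hroot hfull w (fun u hu => h u hu)
        exact ⟨[], w, nil_mem_leafSubmonoid, hwS, h w (List.prefix_refl w), rfl⟩
  exact key w.length w le_rfl

include hpref hnontriv in
theorem decomp_unique :
    ∀ n (ω₁ v₁ ω₂ v₂ : List (Fin p)), ω₁.length ≤ n →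
      ω₁ ∈ leafSubmonoid p S → v₁ ∈ S → v₁ ∉ leaves p S →
      ω₂ ∈ leafSubmonoid p S → v₂ ∈ S → v₂ ∉ leaves p S →
      ω₁ ++ v₁ = ω₂ ++ v₂ → ω₁ = ω₂ ∧ v₁ = v₂ := by
  intro n
  induction n with
  | zero =>
    intro ω₁ v₁ ω₂ v₂ hlen hω₁ hv₁ hv₁nl hω₂ hv₂ hv₂nl heq
    obtain rfl : ω₁ = [] := List.length_eq_zero_iff.mp (Nat.le_zero.mp hlen)
    rcases leafSubmonoid_destruct hω₂ with rfl | ⟨u, hu, r, hr, rfl⟩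
    · exact ⟨rfl, heq⟩
    · exfalso
      simp only [List.nil_append] at heq
      refine leaf_not_prefix hpref hu hv₁ hv₁nl ⟨r ++ v₂, ?_⟩
      rw [heq, List.append_assoc]
  | succ n ih =>
    intro ω₁ v₁ ω₂ v₂ hlen hω₁ hv₁ hv₁nl hω₂ hv₂ hv₂nl heq
    rcases leafSubmonoid_destruct hω₁ with rfl | ⟨u₁, hu₁, r₁, hr₁, rfl⟩
    · rcases leafSubmonoid_destruct hω₂ with rfl | ⟨u₂, hu₂, r₂, hr₂, rfl⟩
      · exact ⟨rfl, heq⟩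
      · exfalso
        simp only [List.nil_append] at heq
        refine leaf_not_prefix hpref hu₂ hv₁ hv₁nl ⟨r₂ ++ v₂, ?_⟩
        rw [heq, List.append_assoc]
    · rcases leafSubmonoid_destruct hω₂ with rfl | ⟨u₂, hu₂, r₂, hr₂, rfl⟩
      · exfalso
        simp only [List.nil_append] at heq
        refine leaf_not_prefix hpref hu₁ hv₂ hv₂nl ⟨r₁ ++ v₁, ?_⟩
        rw [← heq, List.append_assoc]
      · have hpre₁ : u₁ <+: (u₁ ++ r₁) ++ v₁ := ⟨r₁ ++ v₁, by simp⟩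
        have hpre₂ : u₂ <+: (u₁ ++ r₁) ++ v₁ := by
          rw [heq]
          exact ⟨r₂ ++ v₂, by simp⟩
        have huu : u₁ = u₂ := by
          rcases List.prefix_or_prefix_of_prefix hpre₁ hpre₂ with h | h
          · exact leaves_antichain hpref hu₁ hu₂ h
          · exact (leaves_antichain hpref hu₂ hu₁ h).symm
        subst huu
        have heq' : r₁ ++ v₁ = r₂ ++ v₂ := by
          rw [List.append_assoc, List.append_assoc] at heq
          exact List.append_cancel_left heq
        have hu₁ne : u₁ ≠ [] := fun h' => nil_not_leaf hpref hnontriv (h' ▸ hu₁)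
        have hr₁len : r₁.length ≤ n := by
          have : 0 < u₁.length := List.length_pos_iff.mpr hu₁ne
          rw [List.length_append] at hlen
          omega
        obtain ⟨h1, h2⟩ := ih r₁ v₁ r₂ v₂ hr₁len hr₁ hv₁ hv₁nl hr₂ hv₂ hv₂nl heq'
        exact ⟨by rw [h1], h2⟩

end Comb

end TileAux

namespace TileAux

section Main

set_option linter.unusedSectionVars false

variable {p : ℕ} [Fact p.Prime] {S : Set (List (Fin p))}

variable (hroot : ([] : List (Fin p)) ∈ S)
variable (hpref : ∀ v ∈ S, ∀ w : List (Fin p), w <+: v → w ∈ S)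
variable (hnontriv : ∃ w ∈ S, w ≠ [])
variable (hfull : ∀ s ∈ S \ leaves p S, ∀ c : Fin p, s ++ [c] ∈ S)

/-- `S` is a tile of a tiling of the complete `p`-ary tree with translate set `Ω`. -/
def IsTile' (S Ω : Set (List (Fin p))) : Prop :=
  ∀ (w : List (Fin p)) (c : Fin p),
    ∃! ωv : List (Fin p) × List (Fin p),
      ωv.1 ∈ Ω ∧ ωv.2 ∈ S ∧ ωv.2 ++ [c] ∈ S ∧ w = ωv.1 ++ ωv.2

include hroot hpref hnontriv hfull in
theorem tile_of_full : IsTile' S (leafSubmonoid p S) := by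
  intro w c
  obtain ⟨ω, v, hω, hv, hvnl, rfl⟩ := exists_decomp hroot hpref hnontriv hfull w
  refine ⟨(ω, v), ⟨hω, hv, hfull v ⟨hv, hvnl⟩ c, rfl⟩, ?_⟩
  rintro ⟨ω', v'⟩ ⟨hω', hv', hvc', heq⟩
  have hvnl' : v' ∉ leaves p S := fun hl => hl.2 c hvc'
  obtain ⟨h1, h2⟩ := decomp_unique hpref hnontriv ω'.length ω' v' ω v le_rfl hω' hv'
    hvnl' hω hv hvnl heq.symm
  simp only [Prod.mk.injEq]
  exact ⟨h1, h2⟩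

include hroot hpref in
theorem full_of_tile {Ω : Set (List (Fin p))} (hΩ : IsTile' S Ω) :
    ∀ s ∈ S \ leaves p S, ∀ c : Fin p, s ++ [c] ∈ S := by
  have hedge : ∀ c : Fin p, ([] : List (Fin p)) ∈ Ω ∧ [c] ∈ S := by
    intro c
    obtain ⟨⟨ω, v⟩, ⟨hω, hv, hvc, hEq⟩, _⟩ := hΩ [] c
    obtain ⟨h1, h2⟩ := List.append_eq_nil_iff.mp hEq.symm
    subst h1; subst h2
    exact ⟨hω, by simpa using hvc⟩
  rintro s ⟨hsS, hsnl⟩ c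
  have hex : ∃ c₀ : Fin p, s ++ [c₀] ∈ S := by
    by_contra h
    push_neg at h
    exact hsnl ⟨hsS, h⟩
  obtain ⟨c₀, hc₀⟩ := hex
  by_contra hc
  obtain ⟨⟨ω, v⟩, ⟨hω, hv, hvc, hEq⟩, _⟩ := hΩ s c
  have hωne : ω ≠ [] := by
    rintro rfl
    rw [List.nil_append] at hEq
    subst hEq
    exact hc hvc
  by_cases hveq : v = []
  · subst hveq
    rw [List.append_nil] at hEq
    have hsne : s ≠ [] := by rw [hEq]; exact hωne
    obtain ⟨ww, -, huniq⟩ := hΩ s c₀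
    have h1 := huniq ([], s) ⟨(hedge c₀).1, hsS, hc₀, by simp⟩
    have h2 := huniq (s, []) ⟨by rw [hEq]; exact hω, hroot, (hedge c₀).2, by simp [hEq]⟩
    have h3 := h1.trans h2.symm
    exact hsne (congrArg Prod.fst h3).symm
  · have hpre : ω <+: s := ⟨v, hEq.symm⟩
    have hne : ω ≠ s := by
      rintro rfl
      apply hveq
      have h' : ω ++ ([] : List (Fin p)) = ω ++ v := by simpa using hEq
      exact (List.append_cancel_left h').symm
    obtain ⟨d, hd⟩ := exists_snoc_prefix hpre hne
    have hωS : ω ∈ S := hpref s hsS ω hpre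
    have hωdS : ω ++ [d] ∈ S := hpref s hsS _ hd
    obtain ⟨ww, -, huniq⟩ := hΩ ω d
    have h1 := huniq ([], ω) ⟨(hedge d).1, hωS, hωdS, by simp⟩
    have h2 := huniq (ω, []) ⟨hω, hroot, (hedge d).2, by simp⟩
    have h3 := h1.trans h2.symm
    exact hωne (congrArg Prod.fst h3).symm

include hroot hpref hfull in
theorem ballPartition_of_full (hfin : S.Finite) : IsBallPartition p (leaves p S) := by
  refine ⟨fun w _ => ⟨_, self_mem_padicBall w⟩, ?_, ?_⟩
  · intro v hv w hw hne
    rw [Set.disjoint_left]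
    intro x hxv hxw
    rcases comparable_of_mem hxv hxw with h | h
    · exact hne (leaves_antichain hpref hv hw h)
    · exact hne (leaves_antichain hpref hw hv h).symm
  · rw [Set.eq_univ_iff_forall]
    intro x
    rw [Set.mem_iUnion₂]
    have hKfin : {w ∈ S | x ∈ padicBall p w}.Finite := hfin.subset (fun w hw => hw.1)
    have hKne : {w ∈ S | x ∈ padicBall p w}.Nonempty := ⟨[], hroot, mem_padicBall_nil x⟩
    obtain ⟨w, hwK, hwmax⟩ :=
      Set.Finite.exists_maximalFor List.length _ hKfin hKne
    refine ⟨w, ⟨hwK.1, ?_⟩, hwK.2⟩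
    intro c hcS
    have hwnl : w ∉ leaves p S := fun hl => hl.2 c hcS
    obtain ⟨c', hc'⟩ := exists_child hwK.2
    have hmem : w ++ [c'] ∈ {w ∈ S | x ∈ padicBall p w} := ⟨hfull w ⟨hwK.1, hwnl⟩ c', hc'⟩
    have h5 := hwmax hmem (by simp)
    simp at h5

include hpref in
theorem full_of_ballPartition (hpart : IsBallPartition p (leaves p S)) :
    ∀ s ∈ S \ leaves p S, ∀ c : Fin p, s ++ [c] ∈ S := by
  rintro s ⟨hsS, hsnl⟩ c
  obtain ⟨-, -, hcover⟩ := hpart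
  have hx : ((wordVal p (s ++ [c]) : ℤ_[p])) ∈ ⋃ w ∈ leaves p S, padicBall p w := by
    rw [hcover]; trivial
  rw [Set.mem_iUnion₂] at hx
  obtain ⟨ℓ, hℓ, hxℓ⟩ := hx
  have hxs : ((wordVal p (s ++ [c]) : ℤ_[p])) ∈ padicBall p (s ++ [c]) :=
    self_mem_padicBall _
  rcases comparable_of_mem hxs hxℓ with h | h
  · exact hpref ℓ hℓ.1 _ h
  · by_cases heq2 : ℓ = s ++ [c]
    · exact heq2 ▸ hℓ.1
    · exfalso
      obtain ⟨d, hd⟩ := exists_snoc_prefix h heq2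
      by_cases heq3 : ℓ ++ [d] = s ++ [c]
      · have h4 : ℓ = s := (List.append_inj' heq3 rfl).1
        exact hsnl (h4 ▸ hℓ)
      · have hlen : (ℓ ++ [d]).length ≤ s.length := by
          have h1 := hd.length_le
          have e1 : (s ++ [c]).length = s.length + 1 := by simp
          rcases lt_or_eq_of_le h1 with h2 | h2
          · omega
          · exact absurd (hd.eq_of_length h2) heq3
        have hps : ℓ ++ [d] <+: s :=
          List.prefix_of_prefix_length_le hd (List.prefix_append s [c]) hlen
        exact hℓ.2 d (hpref s hsS _ hps)

end Main

end TileAux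

/-- For a nontrivial finite subtree `S` of the `p`-ary tree rooted at the empty word, the
following are equivalent: (1) `S` is a tile of some tiling of the `p`-ary tree;
(2) the balls of the leaves of `S` partition `ℤ_p`; (3) every non-leaf node of `S` splits
completely in `S`. Moreover, in that case the translate set `Ω` may be chosen to be the
submonoid of the free monoid of words generated by the leaves of `S`. -/
theorem tile_equivalence (p : ℕ) [Fact p.Prime]
    (S : Set (List (Fin p))) (hfin : S.Finite) (hroot : ([] : List (Fin p)) ∈ S)
    (hpref : ∀ v ∈ S, ∀ w : List (Fin p), w <+: v → w ∈ S)
    (hnontriv : ∃ w ∈ S, w ≠ []) :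
    ([ ∃ Ω : Set (List (Fin p)), IsTile p S Ω,
       IsBallPartition p (leaves p S),
       ∀ s ∈ S \ leaves p S, ∀ c : Fin p, s ++ [c] ∈ S ].TFAE) ∧
    ((∃ Ω : Set (List (Fin p)), IsTile p S Ω) → IsTile p S (leafSubmonoid p S)) := by
  have hIsTile : ∀ Ω : Set (List (Fin p)), IsTile p S Ω ↔ TileAux.IsTile' S Ω :=
    fun Ω => Iff.rfl
  have hfull_of_tile : (∃ Ω, IsTile p S Ω) →
      ∀ s ∈ S \ leaves p S, ∀ c : Fin p, s ++ [c] ∈ S := by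
    rintro ⟨Ω, hΩ⟩
    exact TileAux.full_of_tile hroot hpref ((hIsTile Ω).mp hΩ)
  constructor
  · tfae_have 1 → 3 := hfull_of_tile
    tfae_have 3 → 1 := fun h => ⟨leafSubmonoid p S,
      (hIsTile _).mpr (TileAux.tile_of_full hroot hpref hnontriv h)⟩
    tfae_have 3 → 2 := fun h => TileAux.ballPartition_of_full hroot hpref h hfin
    tfae_have 2 → 3 := fun h => TileAux.full_of_ballPartition hpref h
    tfae_finish
  · intro h
    exact (hIsTile _).mpr
      (TileAux.tile_of_full hroot hpref hnontriv (hfull_of_tile h))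
end

section
/- Let p be a prime and let S be a nontrivial finite set of words over {0, …, p−1} containing the empty word and closed under prefixes, and suppose S is a tile of a tiling of T_p with translate set Ω (every edge (w, w ++ [c]) of the complete p-ary tree can be written uniquely as (ω ++ v, ω ++ v ++ [c]) with ω ∈ Ω, v ∈ S, v ++ [c] ∈ S). Then Ω necessarily equals the submonoid of the free monoid of words under concatenation generated by the set of leaves L(S). -/
/-- If `S` is a tile of a tiling of the complete `p`-ary tree with translate set `Ω`, then
`Ω` is necessarily the submonoid of the free monoid of words generated by the leaves
of `S`. -/
theorem tiling_translates_eq_leafSubmonoid (p : ℕ) [Fact p.Prime]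
    (S : Set (List (Fin p))) (hfin : S.Finite) (hroot : ([] : List (Fin p)) ∈ S)
    (hpref : ∀ v ∈ S, ∀ w : List (Fin p), w <+: v → w ∈ S)
    (hnontriv : ∃ w ∈ S, w ≠ [])
    (Ω : Set (List (Fin p))) (htile : IsTile p S Ω) :
    Ω = leafSubmonoid p S := by
  have hp : 0 < p := (Fact.out : p.Prime).pos
  set c0 : Fin p := ⟨0, hp⟩ with hc0
  -- the empty word is in Ω
  have hempty : ([] : List (Fin p)) ∈ Ω := by
    obtain ⟨⟨ω, v⟩, ⟨hω, hv, hvc, heq⟩, -⟩ := htile [] c0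
    obtain ⟨h1, h2⟩ := List.append_eq_nil_iff.mp heq.symm
    rwa [h1] at hω
  -- every single-letter word is in S
  have hsingle : ∀ c : Fin p, [c] ∈ S := by
    intro c
    obtain ⟨⟨ω, v⟩, ⟨hω, hv, hvc, heq⟩, -⟩ := htile [] c
    obtain ⟨h1, h2⟩ := List.append_eq_nil_iff.mp heq.symm
    rwa [h2] at hvc
  -- leaves are nonempty
  have hleaf_ne : ∀ ℓ ∈ leaves p S, ℓ ≠ [] := by
    rintro ℓ ⟨hℓ, hnc⟩ rfl
    exact hnc c0 (by simpa using hsingle c0)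
  -- Claim A: Ω is closed under appending a leaf
  have claimA : ∀ ω ∈ Ω, ∀ ℓ ∈ leaves p S, ω ++ ℓ ∈ Ω := by
    rintro ω hω ℓ ⟨hℓS, hℓleaf⟩
    obtain ⟨⟨ω', v⟩, ⟨hω', hv, hvc, heq⟩, -⟩ := htile (ω ++ ℓ) c0
    dsimp only at hω' hv hvc heq
    -- heq : ω ++ ℓ = ω' ++ v
    rcases List.append_eq_append_iff.mp heq with ⟨t, ht1, ht2⟩ | ⟨u, hu1, hu2⟩
    · -- ω' = ω ++ t, ℓ = t ++ v
      rcases v with _ | ⟨d, v'⟩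
      · -- v = [], so ω' = ω ++ ℓ ∈ Ω
        simp only [List.append_nil] at ht2
        rw [← ht2] at ht1
        rwa [ht1] at hω'
      · -- v = d :: v'
        have htS : t ∈ S := hpref ℓ hℓS t ⟨d :: v', ht2.symm⟩
        have htdS : t ++ [d] ∈ S := hpref ℓ hℓS _ ⟨v', by simp [ht2]⟩
        obtain ⟨q, hq, huniq⟩ := htile (ω ++ t) d
        have e1 := huniq (ω', []) ⟨hω', hroot, by simpa using hsingle d, by simp [ht1]⟩
        have e2 := huniq (ω, t) ⟨hω, htS, htdS, rfl⟩
        have e3 : (ω', ([] : List (Fin p))) = (ω, t) := e1.trans e2.symm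
        have ht0 : t = [] := (Prod.mk.injEq _ _ _ _ ▸ e3).2.symm
        subst ht0
        simp only [List.nil_append] at ht2
        exact absurd (ht2 ▸ hvc) (hℓleaf c0)
    · -- ω = ω' ++ u, v = u ++ ℓ
      obtain ⟨e, ℓ', rfl⟩ : ∃ e ℓ', ℓ = e :: ℓ' := by
        rcases ℓ with _ | ⟨e, ℓ'⟩
        · exact absurd rfl (hleaf_ne [] ⟨hℓS, hℓleaf⟩)
        · exact ⟨e, ℓ', rfl⟩
      have huS : u ∈ S := hpref v hv u ⟨e :: ℓ', hu2.symm⟩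
      have hueS : u ++ [e] ∈ S := hpref v hv _ ⟨ℓ', by simp [hu2]⟩
      obtain ⟨q, hq, huniq⟩ := htile ω e
      have e1 := huniq (ω, []) ⟨hω, hroot, by simpa using hsingle e, by simp⟩
      have e2 := huniq (ω', u) ⟨hω', huS, hueS, hu1⟩
      have e3 : (ω, ([] : List (Fin p))) = (ω', u) := e1.trans e2.symm
      have hu0 : u = [] := (Prod.mk.injEq _ _ _ _ ▸ e3).2.symm
      subst hu0
      simp only [List.nil_append] at hu2
      exact absurd (hu2 ▸ hvc) (hℓleaf c0)
  -- Ω is contained in the leaf submonoid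
  have toClosure : ∀ n : ℕ, ∀ ω ∈ Ω, ω.length ≤ n →
      FreeMonoid.ofList ω ∈ Submonoid.closure (FreeMonoid.ofList '' leaves p S) := by
    intro n
    induction n with
    | zero =>
        intro ω hω hlen
        have : ω = [] := List.length_eq_zero_iff.mp (Nat.le_zero.mp hlen)
        subst this
        exact one_mem _
    | succ n ih =>
        intro ω hω hlen
        rcases eq_or_ne ω [] with rfl | hne
        · exact one_mem _
        · obtain ⟨⟨ω₂, v⟩, ⟨hω₂, hv, hvd, heq⟩, -⟩ := htile ω.dropLast (ω.getLast hne)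
          set s : List (Fin p) := v ++ [ω.getLast hne] with hs
          have hωeq : ω = ω₂ ++ s := by
            conv_lhs => rw [← List.dropLast_append_getLast hne]
            rw [heq, hs, List.append_assoc]
          have hsleaf : s ∈ leaves p S := by
            refine ⟨hvd, ?_⟩
            intro e hse
            obtain ⟨q, hq, huniq⟩ := htile ω e
            have e1 := huniq (ω, []) ⟨hω, hroot, by simpa using hsingle e, by simp⟩
            have e2 := huniq (ω₂, s) ⟨hω₂, hvd, hse, hωeq⟩
            have e3 : (ω, ([] : List (Fin p))) = (ω₂, s) := e1.trans e2.symm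
            have hs0 : s = [] := (Prod.mk.injEq _ _ _ _ ▸ e3).2.symm
            simp [hs] at hs0
          have hω₂Ω : ω₂ ∈ Ω := hω₂
          have hlen2 : ω₂.length ≤ n := by
            have h1 : ω.length = ω₂.length + s.length := by rw [hωeq, List.length_append]
            have h2 : 1 ≤ s.length := by simp [hs]
            omega
          have hmem := ih ω₂ hω₂Ω hlen2
          have : FreeMonoid.ofList ω =
              FreeMonoid.ofList ω₂ * FreeMonoid.ofList s := by rw [hωeq]; rfl
          rw [this]
          exact mul_mem hmem (Submonoid.subset_closure ⟨s, hsleaf, rfl⟩)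
  -- the leaf submonoid is contained in Ω
  have fromClosure : ∀ w : List (Fin p),
      FreeMonoid.ofList w ∈ Submonoid.closure (FreeMonoid.ofList '' leaves p S) → w ∈ Ω := by
    intro w hw
    let T : Submonoid (FreeMonoid (Fin p)) :=
      { carrier := {x | ∀ ω ∈ Ω, ω ++ FreeMonoid.toList x ∈ Ω}
        one_mem' := by intro ω hω; simpa using hω
        mul_mem' := by
          intro x y hx hy ω hω
          have := hy _ (hx ω hω)
          simpa [List.append_assoc] using this }
    have hT : Submonoid.closure (FreeMonoid.ofList '' leaves p S) ≤ T := by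
      refine Submonoid.closure_le.mpr ?_
      rintro _ ⟨ℓ, hℓ, rfl⟩ ω hω
      simpa using claimA ω hω ℓ hℓ
    have := hT hw [] hempty
    simpa using this
  ext w
  constructor
  · intro hw
    exact toClosure w.length w hw le_rfl
  · intro hw
    exact fromClosure w hw
end

section
/- Let p be a prime and let S be a nontrivial finite set of words over {0, …, p−1} containing the empty word, closed under prefixes, and such that every non-leaf node of S splits completely (for every s ∈ S \ L(S) and every c ∈ Fin p, s ++ [c] ∈ S). Then every word w over {0, …, p−1} admits a unique factorization w = ℓ₁ ++ ℓ₂ ++ ⋯ ++ ℓₙ ++ s with n ≥ 0, each ℓᵢ ∈ L(S), and s ∈ S \ L(S). -/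
section Aux

variable {p : ℕ} {S : Set (List (Fin p))}

lemma stop_eq_aux (hpref : ∀ v ∈ S, ∀ w : List (Fin p), w <+: v → w ∈ S)
    {w a b : List (Fin p)} (hb : b ∈ S) (hab : a <+: b) (hbw : b <+: w)
    (ha' : a ∈ leaves p S ∨ a = w) : a = b := by
  by_contra hne
  obtain ⟨t, rfl⟩ := hab
  have ht : t ≠ [] := by rintro rfl; simp at hne
  obtain ⟨c, t, rfl⟩ := List.exists_cons_of_ne_nil ht
  have hmem : a ++ [c] ∈ S := hpref _ hb _ ⟨t, by simp⟩
  rcases ha' with hleaf | rfl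
  · exact hleaf.2 c hmem
  · have h1 : (a ++ c :: t).length ≤ a.length := hbw.length_le
    simp only [List.length_append, List.length_cons] at h1
    omega

lemma stop_eq (hpref : ∀ v ∈ S, ∀ w : List (Fin p), w <+: v → w ∈ S)
    {w a b : List (Fin p)} (ha : a ∈ S) (hb : b ∈ S) (haw : a <+: w) (hbw : b <+: w)
    (ha' : a ∈ leaves p S ∨ a = w) (hb' : b ∈ leaves p S ∨ b = w) : a = b := by
  rcases List.prefix_or_prefix_of_prefix haw hbw with h | h
  · exact stop_eq_aux hpref hb h hbw ha'
  · exact (stop_eq_aux hpref ha h haw hb').symm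

lemma exists_fact (hfin : S.Finite) (hroot : ([] : List (Fin p)) ∈ S)
    (hpref : ∀ v ∈ S, ∀ w : List (Fin p), w <+: v → w ∈ S)
    (hnil : ([] : List (Fin p)) ∉ leaves p S)
    (hsplit : ∀ s ∈ S \ leaves p S, ∀ c : Fin p, s ++ [c] ∈ S) :
    ∀ w : List (Fin p),
      ∃ ls : List (List (Fin p)) × List (Fin p),
        (∀ x ∈ ls.1, x ∈ leaves p S) ∧ ls.2 ∈ S \ leaves p S ∧
          w = ls.1.flatten ++ ls.2 := by
  suffices H : ∀ n, ∀ w : List (Fin p), w.length = n →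
      ∃ ls : List (List (Fin p)) × List (Fin p),
        (∀ x ∈ ls.1, x ∈ leaves p S) ∧ ls.2 ∈ S \ leaves p S ∧
          w = ls.1.flatten ++ ls.2 by
    intro w; exact H w.length w rfl
  intro n
  induction n using Nat.strong_induction_on with
  | _ n ih =>
    intro w hw
    classical
    set F : Finset (List (Fin p)) := hfin.toFinset.filter (· <+: w) with hF
    have hFne : F.Nonempty := ⟨[], by simp [hF, hfin.mem_toFinset, hroot]⟩
    obtain ⟨u, huF, hmax⟩ := F.exists_max_image List.length hFne
    have huS : u ∈ S := by
      have := huF; simp [hF, hfin.mem_toFinset] at this; exact this.1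
    have huw : u <+: w := by
      have := huF; simp [hF, hfin.mem_toFinset] at this; exact this.2
    by_cases hleaf : u ∈ leaves p S
    · have hune : u ≠ [] := by rintro rfl; exact hnil hleaf
      obtain ⟨r, rfl⟩ := huw
      have hr : r.length < n := by
        have h0 : 0 < u.length := List.length_pos_iff.mpr hune
        have := hw
        simp only [List.length_append] at this
        omega
      obtain ⟨⟨L, s⟩, h1, h2, h3⟩ := ih r.length hr r rfl
      refine ⟨⟨u :: L, s⟩, ?_, h2, ?_⟩
      · intro x hx
        rcases List.mem_cons.mp hx with rfl | hx
        · exact hleaf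
        · exact h1 x hx
      · simp only [List.flatten_cons, List.append_assoc]
        rw [← h3]
    · have huweq : u = w := by
        by_contra hne
        obtain ⟨t, rfl⟩ := huw
        have ht : t ≠ [] := by rintro rfl; simp at hne
        obtain ⟨c, t, rfl⟩ := List.exists_cons_of_ne_nil ht
        have hmem : u ++ [c] ∈ S := hsplit u ⟨huS, hleaf⟩ c
        have hmemF : u ++ [c] ∈ F := by
          rw [hF, Finset.mem_filter]
          exact ⟨hfin.mem_toFinset.mpr hmem, ⟨t, by simp⟩⟩
        have := hmax _ hmemF
        simp only [List.length_append, List.length_cons, List.length_nil] at this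
        omega
      subst huweq
      exact ⟨⟨[], u⟩, by simp, ⟨huS, hleaf⟩, by simp⟩

lemma uniq_fact (hpref : ∀ v ∈ S, ∀ w : List (Fin p), w <+: v → w ∈ S)
    (hnil : ([] : List (Fin p)) ∉ leaves p S) :
    ∀ w : List (Fin p), ∀ a b : List (List (Fin p)) × List (Fin p),
      (∀ x ∈ a.1, x ∈ leaves p S) → a.2 ∈ S \ leaves p S → w = a.1.flatten ++ a.2 →
      (∀ x ∈ b.1, x ∈ leaves p S) → b.2 ∈ S \ leaves p S → w = b.1.flatten ++ b.2 →
      a = b := by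
  suffices H : ∀ n, ∀ w : List (Fin p), w.length = n →
      ∀ a b : List (List (Fin p)) × List (Fin p),
      (∀ x ∈ a.1, x ∈ leaves p S) → a.2 ∈ S \ leaves p S → w = a.1.flatten ++ a.2 →
      (∀ x ∈ b.1, x ∈ leaves p S) → b.2 ∈ S \ leaves p S → w = b.1.flatten ++ b.2 →
      a = b by
    intro w; exact H w.length w rfl
  intro n
  induction n using Nat.strong_induction_on with
  | _ n ih =>
    rintro w hw ⟨L1, s1⟩ ⟨L2, s2⟩ ha1 ha2 ha3 hb1 hb2 hb3
    simp only at ha1 ha2 ha3 hb1 hb2 hb3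
    match L1, L2 with
    | [], [] =>
      simp only [List.flatten_nil, List.nil_append] at ha3 hb3
      rw [← ha3, ← hb3]
    | [], ℓ :: L2 =>
      exfalso
      simp only [List.flatten_nil, List.nil_append] at ha3
      subst ha3
      have hℓ : ℓ ∈ leaves p S := hb1 ℓ (by simp)
      have heq : ℓ = w := stop_eq hpref hℓ.1 ha2.1 ⟨L2.flatten ++ s2, by simp [hb3]⟩
        List.prefix_rfl (Or.inl hℓ) (Or.inr rfl)
      rw [heq] at hℓ
      exact ha2.2 hℓ
    | ℓ :: L1, [] =>
      exfalso
      simp only [List.flatten_nil, List.nil_append] at hb3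
      subst hb3
      have hℓ : ℓ ∈ leaves p S := ha1 ℓ (by simp)
      have heq : ℓ = w := stop_eq hpref hℓ.1 hb2.1 ⟨L1.flatten ++ s1, by simp [ha3]⟩
        List.prefix_rfl (Or.inl hℓ) (Or.inr rfl)
      rw [heq] at hℓ
      exact hb2.2 hℓ
    | ℓ1 :: L1, ℓ2 :: L2 =>
      have hℓ1 : ℓ1 ∈ leaves p S := ha1 ℓ1 (by simp)
      have hℓ2 : ℓ2 ∈ leaves p S := hb1 ℓ2 (by simp)
      have heq : ℓ1 = ℓ2 := stop_eq (w := w) hpref hℓ1.1 hℓ2.1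
        ⟨L1.flatten ++ s1, by simp [ha3]⟩ ⟨L2.flatten ++ s2, by simp [hb3]⟩
        (Or.inl hℓ1) (Or.inl hℓ2)
      subst heq
      have hne : ℓ1 ≠ [] := by rintro rfl; exact hnil hℓ1
      have hr : L1.flatten ++ s1 = L2.flatten ++ s2 := by
        apply List.append_cancel_left (as := ℓ1)
        rw [ha3] at hb3
        simpa [List.append_assoc] using hb3
      have hlen : (L1.flatten ++ s1).length < n := by
        have h0 : 0 < ℓ1.length := List.length_pos_iff.mpr hne
        have hw' := hw
        rw [ha3] at hw'
        simp only [List.flatten_cons, List.length_append] at hw'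
        simp only [List.length_append]
        omega
      have hthis := ih (L1.flatten ++ s1).length hlen (L1.flatten ++ s1) rfl
        (L1, s1) (L2, s2)
        (fun x hx => ha1 x (by simp [hx])) ha2 rfl
        (fun x hx => hb1 x (by simp [hx])) hb2 hr
      have e1 : L1 = L2 := congrArg Prod.fst hthis
      have e2 : s1 = s2 := congrArg Prod.snd hthis
      rw [e1, e2]

end Aux

/-- If `S` is a nontrivial finite prefix-closed set of words containing the empty word in
which every non-leaf node splits completely, then every word `w` factors uniquely as
`w = ℓ₁ ++ ⋯ ++ ℓₙ ++ s` with each `ℓᵢ` a leaf of `S` and `s ∈ S \ L(S)`. -/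
theorem unique_leaf_factorization (p : ℕ) [Fact p.Prime]
    (S : Set (List (Fin p))) (hfin : S.Finite) (hroot : ([] : List (Fin p)) ∈ S)
    (hpref : ∀ v ∈ S, ∀ w : List (Fin p), w <+: v → w ∈ S)
    (hnontriv : ∃ w ∈ S, w ≠ [])
    (hsplit : ∀ s ∈ S \ leaves p S, ∀ c : Fin p, s ++ [c] ∈ S) :
    ∀ w : List (Fin p),
      ∃! ls : List (List (Fin p)) × List (Fin p),
        (∀ x ∈ ls.1, x ∈ leaves p S) ∧ ls.2 ∈ S \ leaves p S ∧
          w = ls.1.flatten ++ ls.2 := by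
  have hnil : ([] : List (Fin p)) ∉ leaves p S := by
    obtain ⟨w0, hw0, hne⟩ := hnontriv
    obtain ⟨c, t, rfl⟩ := List.exists_cons_of_ne_nil hne
    intro h
    exact h.2 c (hpref _ hw0 _ ⟨t, by simp⟩)
  intro w
  obtain ⟨ls, h1, h2, h3⟩ := exists_fact hfin hroot hpref hnil hsplit w
  refine ⟨ls, ⟨h1, h2, h3⟩, ?_⟩
  rintro y ⟨g1, g2, g3⟩
  exact uniq_fact hpref hnil w y ls g1 g2 g3 h1 h2 h3
end

section
/- Let p and q be primes, let S be a nontrivial finite set of words over {0, …, p−1} containing the empty word, closed under prefixes, and with every non-leaf node splitting completely, and let S' be such a set of words over {0, …, q−1}, with #L(S) = #L(S'). Then for any bijection τ : L(S) → L(S') there exists a homeomorphism φ : ℤ_p → ℤ_q such that for every n ≥ 1 and all leaves ℓ₁, …, ℓₙ ∈ L(S), φ maps the p-adic ball B_{ℓ₁ ++ ⋯ ++ ℓₙ} ⊆ ℤ_p onto the q-adic ball B_{τ(ℓ₁) ++ ⋯ ++ τ(ℓₙ)} ⊆ ℤ_q. -/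
set_option maxHeartbeats 1000000


namespace Tiles
variable {p : ℕ}
variable {p : ℕ}

theorem wordVal_nil : wordVal p [] = 0 := rfl
theorem wordVal_cons (a : Fin p) (w : List (Fin p)) :
    wordVal p (a :: w) = a.val + p * wordVal p w := rfl

theorem wordVal_append (w v : List (Fin p)) :
    wordVal p (w ++ v) = wordVal p w + p ^ w.length * wordVal p v := by
  induction w with
  | nil => simp [wordVal_nil, wordVal_cons]
  | cons a w ih =>
      simp only [List.cons_append, wordVal_cons, ih, List.length_cons, pow_succ]
      ring

theorem wordVal_lt (hp : 0 < p) (w : List (Fin p)) : wordVal p w < p ^ w.length := by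
  induction w with
  | nil => simpa [wordVal_nil] using hp
  | cons a w ih =>
      have ha : a.val + 1 ≤ p := a.isLt
      have : a.val + p * wordVal p w < p * p ^ w.length := by
        calc a.val + p * wordVal p w < p + p * wordVal p w := by omega
        _ = p * (wordVal p w + 1) := by ring
        _ ≤ p * p ^ w.length := by
            exact Nat.mul_le_mul_left p ih
      simpa [wordVal_cons, List.length_cons, pow_succ, mul_comm] using this

theorem wordVal_inj (hp : 0 < p) (w v : List (Fin p)) (hl : w.length = v.length)
    (h : ((p : ℤ)) ^ w.length ∣ (wordVal p w : ℤ) - (wordVal p v : ℤ)) : w = v := by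
  induction w generalizing v with
  | nil => exact (List.length_eq_zero_iff.mp hl.symm).symm
  | cons a w ih =>
      cases v with
      | nil => simp at hl
      | cons b v =>
          simp only [List.length_cons, Nat.add_right_cancel_iff] at hl
          have hcast : ((wordVal p (a :: w) : ℤ)) - (wordVal p (b :: v) : ℤ)
              = ((a.val : ℤ) - b.val) + p * ((wordVal p w : ℤ) - wordVal p v) := by
            push_cast [wordVal_cons]; ring
          rw [List.length_cons, hcast] at h
          have hpdvd : (p : ℤ) ∣ ((a.val : ℤ) - b.val) + p * ((wordVal p w : ℤ) - wordVal p v) :=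
            dvd_trans (dvd_pow_self _ (Nat.succ_ne_zero _)) h
          have hab : (p : ℤ) ∣ (a.val : ℤ) - b.val := by
            rw [add_comm] at hpdvd
            exact (dvd_add_right (dvd_mul_right _ _)).mp hpdvd
          have hab' : a = b := by
            have h1 : (a.val : ℤ) - b.val = 0 := by
              refine Int.eq_zero_of_dvd_of_natAbs_lt_natAbs hab ?_
              have := a.isLt; have := b.isLt
              simp only [Int.natAbs_natCast]
              omega
            have : (a.val : ℤ) = b.val := by linarith
            exact Fin.ext (by exact_mod_cast this)
          subst hab'
          have htail : (p:ℤ) ^ w.length ∣ (wordVal p w : ℤ) - wordVal p v := by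
            have h' : (p:ℤ) * (p:ℤ) ^ w.length ∣ (p:ℤ) * ((wordVal p w : ℤ) - wordVal p v) := by
              have : ((a.val : ℤ) - a.val) + p * ((wordVal p w : ℤ) - wordVal p v)
                  = p * ((wordVal p w : ℤ) - wordVal p v) := by ring
              rw [this] at h
              rwa [pow_succ, mul_comm ((p:ℤ)^w.length)] at h
            exact (mul_dvd_mul_iff_left (by exact_mod_cast hp.ne' : (p:ℤ) ≠ 0)).mp h'
          rw [ih v hl htail]
variable {p : ℕ}

/-- first `n` letters of a stream, as a word -/
def word (d : ℕ → Fin p) (n : ℕ) : List (Fin p) := List.ofFn fun i : Fin n => d i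

@[simp] theorem length_word (d : ℕ → Fin p) (n : ℕ) : (word d n).length = n := by
  simp [word]

@[simp] theorem getElem_word (d : ℕ → Fin p) (n i : ℕ) (h : i < (word d n).length) :
    (word d n)[i] = d i := by
  simp [word]

theorem word_succ (d : ℕ → Fin p) (n : ℕ) :
    word d (n + 1) = word d n ++ [d n] := by
  apply List.ext_getElem (by simp)
  intro i h1 h2
  simp only [length_word] at h1
  rcases Nat.lt_or_ge i n with h | h
  · rw [getElem_word, List.getElem_append_left (by simpa using h), getElem_word]
  · have : i = n := by omega
    subst this
    rw [getElem_word, List.getElem_append_right (by simpa using h)]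
    simp

theorem word_prefix (d : ℕ → Fin p) {m n : ℕ} (h : m ≤ n) : word d m <+: word d n := by
  induction n with
  | zero => have : m = 0 := by omega
            subst this; exact List.prefix_refl _
  | succ n ih =>
      rcases Nat.lt_or_ge m (n+1) with h' | h'
      · exact (ih (by omega)).trans (by rw [word_succ]; exact List.prefix_append _ _)
      · have : m = n + 1 := by omega
        subst this; exact List.prefix_refl _

theorem eq_word_of_prefix {d : ℕ → Fin p} {v : List (Fin p)} {n : ℕ}
    (h : v <+: word d n) : v = word d v.length := by
  apply List.ext_getElem (by simp)
  intro i h1 h2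
  have hn : i < n := by
    have := h.length_le; simp only [length_word] at this; omega
  rw [getElem_word, h.getElem h1, getElem_word]




section Padic

open Filter Topology
variable {p : ℕ} [hp : Fact p.Prime]


/-- partial sums of the series `Σ d_k p^k` in `ℤ_p`. -/
noncomputable def sN (d : ℕ → Fin p) (n : ℕ) : ℤ_[p] := (wordVal p (word d n) : ℤ_[p])

theorem norm_sN_sub (d : ℕ → Fin p) {m n : ℕ} (h : m ≤ n) :
    ‖sN d n - sN d m‖ ≤ (p : ℝ) ^ (-(m : ℤ)) := by
  obtain ⟨u, hu⟩ := word_prefix d h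
  have hv : wordVal p (word d n) = wordVal p (word d m) + p ^ m * wordVal p u := by
    rw [← hu, wordVal_append, length_word]
  have : sN d n - sN d m = (p : ℤ_[p]) ^ m * (wordVal p u : ℤ_[p]) := by
    simp only [sN, hv]; push_cast; ring
  rw [this]
  calc ‖(p : ℤ_[p]) ^ m * (wordVal p u : ℤ_[p])‖
      = ‖(p : ℤ_[p]) ^ m‖ * ‖(wordVal p u : ℤ_[p])‖ := norm_mul _ _
    _ ≤ ‖(p : ℤ_[p]) ^ m‖ * 1 := by
        exact mul_le_mul_of_nonneg_left (PadicInt.norm_le_one _) (norm_nonneg _)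
    _ = (p : ℝ) ^ (-(m : ℤ)) := by rw [mul_one, PadicInt.norm_p_pow]

theorem cauchy_sN (d : ℕ → Fin p) : CauchySeq (sN d) := by
  have hp1 : (1:ℝ) < p := by exact_mod_cast hp.out.one_lt
  apply cauchySeq_of_le_geometric (r := (p:ℝ)⁻¹) (C := 1)
  · rw [inv_lt_one_iff₀]; right; exact hp1
  · intro n
    rw [dist_eq_norm, norm_sub_rev, one_mul, inv_pow, ← zpow_natCast, ← zpow_neg]
    exact norm_sN_sub d (Nat.le_succ n)

/-- The sum of the series `Σ d_k p^k` in `ℤ_p`. -/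
noncomputable def limD (d : ℕ → Fin p) : ℤ_[p] :=
  (cauchySeq_tendsto_of_complete (cauchy_sN d)).choose

theorem tendsto_limD (d : ℕ → Fin p) : Tendsto (sN d) atTop (𝓝 (limD d)) :=
  (cauchySeq_tendsto_of_complete (cauchy_sN d)).choose_spec

theorem norm_limD_sub (d : ℕ → Fin p) (m : ℕ) :
    ‖limD d - sN d m‖ ≤ (p : ℝ) ^ (-(m : ℤ)) := by
  have ht : Tendsto (fun n => ‖sN d n - sN d m‖) atTop (𝓝 ‖limD d - sN d m‖) :=
    (((tendsto_limD d).sub tendsto_const_nhds).norm)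
  apply le_of_tendsto ht
  filter_upwards [eventually_ge_atTop m] with n hn
  exact norm_sN_sub d hn

theorem mem_ball_limD (d : ℕ → Fin p) (w : List (Fin p)) :
    limD d ∈ padicBall p w ↔ w = word d w.length := by
  constructor
  · intro h
    have h1 : ‖limD d - (wordVal p w : ℤ_[p])‖ ≤ (p : ℝ) ^ (-(w.length : ℤ)) := h
    have h2 := norm_limD_sub d w.length
    have h3 : ‖sN d w.length - (wordVal p w : ℤ_[p])‖ ≤ (p : ℝ) ^ (-(w.length : ℤ)) := by
      have : sN d w.length - (wordVal p w : ℤ_[p])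
          = (sN d w.length - limD d) + (limD d - (wordVal p w : ℤ_[p])) := by ring
      rw [this]
      refine le_trans (PadicInt.nonarchimedean _ _) ?_
      rw [norm_sub_rev] at h2
      exact max_le h2 h1
    have h4 : ((p : ℤ)) ^ w.length ∣ (wordVal p (word d w.length) : ℤ) - (wordVal p w : ℤ) := by
      have hh := (PadicInt.norm_int_le_pow_iff_dvd (p := p)
        (k := (wordVal p (word d w.length) : ℤ) - (wordVal p w : ℤ)) (n := w.length)).mp ?_
      · exact_mod_cast hh
      · convert h3 using 2
        push_cast [sN]
        ring
    exact (wordVal_inj hp.out.pos (word d w.length) w (by simp)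
      (by simpa using h4)).symm
  · intro h
    show ‖limD d - (wordVal p w : ℤ_[p])‖ ≤ (p : ℝ) ^ (-(w.length : ℤ))
    have hw : (wordVal p w : ℤ_[p]) = sN d w.length := by
      conv_lhs => rw [h]
      rfl
    rw [hw]
    exact norm_limD_sub d w.length


theorem word_ext_elem {d d' : ℕ → Fin p} {n i : ℕ} (h : word d n = word d' n)
    (hi : i < n) : d i = d' i := by
  have h1 : (word d n)[i]'(by simpa using hi) = (word d' n)[i]'(by simpa using hi) := by
    simp_rw [h]
  simpa using h1

theorem limD_inj : Function.Injective (limD (p := p)) := by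
  intro d d' h
  funext i
  have hm : limD d ∈ padicBall p (word d' (i + 1)) := by
    rw [h]
    exact (mem_ball_limD d' (word d' (i + 1))).mpr (by rw [length_word])
  have h1 := (mem_ball_limD d (word d' (i + 1))).mp hm
  rw [length_word] at h1
  exact (word_ext_elem h1 (Nat.lt_succ_self i)).symm

/-- the `n`-th digit of `x` -/
noncomputable def dig (x : ℤ_[p]) (n : ℕ) : ℕ := (x.appr (n + 1) - x.appr n) / p ^ n

theorem appr_succ (x : ℤ_[p]) (n : ℕ) :
    x.appr (n + 1) = x.appr n + dig x n * p ^ n := by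
  obtain ⟨c, hc⟩ := PadicInt.dvd_appr_sub_appr x n (n + 1) (Nat.le_succ n)
  have hm := PadicInt.appr_mono x (Nat.le_succ n)
  have hd : dig x n = c := by
    rw [dig, hc, Nat.mul_div_cancel_left _ (pow_pos hp.out.pos n)]
  have h2 : x.appr (n + 1) - x.appr n = dig x n * p ^ n := by
    rw [hd, hc]; ring
  simp only [Nat.succ_eq_add_one] at hm
  omega

theorem dig_lt (x : ℤ_[p]) (n : ℕ) : dig x n < p := by
  have h1 := PadicInt.appr_lt x (n + 1)
  have h2 := appr_succ x n
  have hp0 := pow_pos hp.out.pos n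
  have h3 : dig x n * p ^ n < p * p ^ n := by
    have h4 : p ^ (n + 1) = p * p ^ n := by ring
    omega
  exact Nat.lt_of_mul_lt_mul_right h3

/-- the digit stream of `x` -/
noncomputable def digSeq (x : ℤ_[p]) (n : ℕ) : Fin p := ⟨dig x n, dig_lt x n⟩

theorem wordVal_word_digSeq (x : ℤ_[p]) (n : ℕ) :
    wordVal p (word (digSeq x) n) = x.appr n := by
  induction n with
  | zero => simp [word, wordVal, PadicInt.appr]
  | succ n ih =>
      rw [word_succ, wordVal_append, ih, length_word, appr_succ]
      have : wordVal p [digSeq x n] = dig x n := by simp [wordVal, digSeq]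
      rw [this]; ring

theorem limD_digSeq (x : ℤ_[p]) : limD (digSeq x) = x := by
  have hp1 : (1 : ℝ) < p := by exact_mod_cast hp.out.one_lt
  have hb : ∀ n : ℕ, dist (sN (digSeq x) n) x ≤ ((p : ℝ)⁻¹) ^ n := by
    intro n
    have h1 : sN (digSeq x) n = (x.appr n : ℤ_[p]) := by
      rw [sN, wordVal_word_digSeq]
    rw [dist_eq_norm, h1, norm_sub_rev]
    have h2 : x - (x.appr n : ℤ_[p]) ∈ Ideal.span {(p : ℤ_[p]) ^ n} :=
      PadicInt.appr_spec n x
    have h3 := (PadicInt.norm_le_pow_iff_mem_span_pow (x - (x.appr n : ℤ_[p])) n).mpr h2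
    rw [inv_pow, ← zpow_natCast, ← zpow_neg]
    exact h3
  have h0 : Filter.Tendsto (fun n : ℕ => ((p : ℝ)⁻¹) ^ n) Filter.atTop (nhds 0) := by
    apply tendsto_pow_atTop_nhds_zero_of_lt_one (by positivity)
    rw [inv_lt_one_iff₀]; right; exact hp1
  have ht : Filter.Tendsto (sN (digSeq x)) Filter.atTop (nhds x) := by
    rw [tendsto_iff_dist_tendsto_zero]
    exact squeeze_zero (fun n => dist_nonneg) hb h0
  exact tendsto_nhds_unique (tendsto_limD (digSeq x)) ht

theorem limD_surj : Function.Surjective (limD (p := p)) :=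
  fun x => ⟨digSeq x, limD_digSeq x⟩

end Padic

section Flat
variable {p : ℕ}

/-- concatenation of the first `n` blocks -/
def flat (a : ℕ → List (Fin p)) (n : ℕ) : List (Fin p) :=
  (List.ofFn fun i : Fin n => a i).flatten

@[simp] theorem flat_zero (a : ℕ → List (Fin p)) : flat a 0 = [] := by simp [flat]

theorem flat_succ (a : ℕ → List (Fin p)) (n : ℕ) :
    flat a (n + 1) = flat a n ++ a n := by
  rw [flat, List.ofFn_succ']
  simp [flat, List.concat_eq_append, List.flatten_append, Fin.coe_castSucc, Fin.val_last]

theorem flat_succ' (a : ℕ → List (Fin p)) (n : ℕ) :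
    flat a (n + 1) = a 0 ++ flat (fun i => a (i + 1)) n := by
  simp [flat, List.ofFn_succ]

theorem flat_prefix (a : ℕ → List (Fin p)) {m n : ℕ} (h : m ≤ n) :
    flat a m <+: flat a n := by
  induction n with
  | zero => have : m = 0 := by omega
            subst this; exact List.prefix_refl _
  | succ n ih =>
      rcases Nat.lt_or_ge m (n + 1) with h' | h'
      · exact (ih (by omega)).trans (by rw [flat_succ]; exact List.prefix_append _ _)
      · have : m = n + 1 := by omega
        subst this; exact List.prefix_refl _

theorem le_length_flat (a : ℕ → List (Fin p)) (hne : ∀ i, a i ≠ []) (n : ℕ) :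
    n ≤ (flat a n).length := by
  induction n with
  | zero => simp
  | succ n ih =>
      rw [flat_succ, List.length_append]
      have := List.length_pos_iff.mpr (hne n)
      omega

/-- the infinite concatenation stream -/
def conc (z : Fin p) (a : ℕ → List (Fin p)) (k : ℕ) : Fin p :=
  (flat a (k + 1)).getD k z

theorem conc_eq (z : Fin p) (a : ℕ → List (Fin p)) (hne : ∀ i, a i ≠ []) {n k : ℕ}
    (hk : k < (flat a n).length) : conc z a k = (flat a n)[k] := by
  have hk1 : k < (flat a (k + 1)).length := lt_of_lt_of_le (Nat.lt_succ_self k) (le_length_flat a hne (k + 1))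
  rw [conc, List.getD_eq_getElem _ _ hk1]
  rcases le_total (k + 1) n with h | h
  · exact (flat_prefix a h).getElem hk1
  · exact ((flat_prefix a h).getElem hk).symm

theorem word_conc (z : Fin p) (a : ℕ → List (Fin p)) (hne : ∀ i, a i ≠ []) (n : ℕ) :
    word (conc z a) ((flat a n).length) = flat a n := by
  apply List.ext_getElem (by simp)
  intro i h1 h2
  rw [getElem_word]
  exact conc_eq z a hne h2

end Flat


section Tree
variable {p : ℕ} {S : Set (List (Fin p))}

theorem leaf_ne_nil (hpref : ∀ v ∈ S, ∀ w : List (Fin p), w <+: v → w ∈ S)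
    (hnontriv : ∃ w ∈ S, w ≠ []) {l : List (Fin p)} (hl : l ∈ leaves p S) : l ≠ [] := by
  rintro rfl
  obtain ⟨w, hw, hwne⟩ := hnontriv
  cases w with
  | nil => exact hwne rfl
  | cons c t =>
      have : [c] ∈ S := hpref _ hw [c] ⟨t, rfl⟩
      exact hl.2 c (by simpa using this)

theorem leaf_eq_of_prefix (hpref : ∀ v ∈ S, ∀ w : List (Fin p), w <+: v → w ∈ S)
    {l l' : List (Fin p)} (hl : l ∈ leaves p S) (hl' : l' ∈ S) (h : l <+: l') : l = l' := by
  obtain ⟨u, hu⟩ := h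
  cases u with
  | nil => simpa using hu
  | cons c t =>
      exfalso
      apply hl.2 c
      apply hpref _ hl' (l ++ [c])
      exact ⟨t, by rw [← hu]; simp⟩

theorem leaf_eq_leaf_of_prefix (hpref : ∀ v ∈ S, ∀ w : List (Fin p), w <+: v → w ∈ S)
    {l l' : List (Fin p)} (hl : l ∈ leaves p S) (hl' : l' ∈ leaves p S)
    (h : l <+: l' ∨ l' <+: l) : l = l' := by
  rcases h with h | h
  · exact leaf_eq_of_prefix hpref hl hl'.1 h
  · exact (leaf_eq_of_prefix hpref hl' hl.1 h).symm

theorem parse_exists (hfin : S.Finite) (hroot : ([] : List (Fin p)) ∈ S)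
    (hsplit : ∀ s ∈ S \ leaves p S, ∀ c : Fin p, s ++ [c] ∈ S)
    (d : ℕ → Fin p) : ∃ ℓ ∈ leaves p S, ℓ = word d ℓ.length := by
  classical
  set T : Set ℕ := {n | word d n ∈ S} with hT
  have hTfin : T.Finite := by
    apply Set.Finite.subset (hfin.image List.length)
    intro n hn
    exact ⟨word d n, hn, length_word d n⟩
  have hT0 : (0 : ℕ) ∈ T := by
    have : word d 0 = [] := by simp [word]
    simpa [hT, this] using hroot
  obtain ⟨n, hnT, hmax⟩ := Set.Finite.exists_maximalFor id T hTfin ⟨0, hT0⟩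
  refine ⟨word d n, ⟨hnT, ?_⟩, by rw [length_word]⟩
  by_contra hnl
  push_neg at hnl
  obtain ⟨c0, hc0⟩ := hnl
  have hleaf : word d n ∉ leaves p S := fun h => h.2 c0 hc0
  have hnext : word d (n + 1) ∈ S := by
    rw [word_succ]
    exact hsplit _ ⟨hnT, hleaf⟩ (d n)
  have h5 := hmax hnext (by simp)
  simp only [id] at h5
  omega

/-- uniqueness of leaf parsing along a block decomposition -/
theorem parse_unique_list (hpref : ∀ v ∈ S, ∀ w : List (Fin p), w <+: v → w ∈ S)
    (l : List (List (Fin p))) (hl : ∀ x ∈ l, x ∈ leaves p S)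
    (a : ℕ → List (Fin p)) (ha : ∀ i, a i ∈ leaves p S)
    (hne : ∀ i, a i ≠ []) :
    ∀ n, l.length ≤ n → l.flatten <+: flat a n →
      ∀ i (h : i < l.length), a i = l.get ⟨i, h⟩ := by
  induction l generalizing a with
  | nil => intro n _ _ i h; simp at h
  | cons b ls ih =>
      intro n hn hpfx i hi
      obtain ⟨m, rfl⟩ : ∃ m, n = m + 1 := ⟨n - 1, by simp at hn; omega⟩
      rw [flat_succ'] at hpfx
      have hb : b <+: a 0 ++ flat (fun i => a (i + 1)) m := by
        refine List.IsPrefix.trans ?_ hpfx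
        simp only [List.flatten_cons]
        exact List.prefix_append _ _
      have ha0 : a 0 <+: a 0 ++ flat (fun i => a (i + 1)) m := List.prefix_append _ _
      have hab : a 0 = b :=
        (leaf_eq_leaf_of_prefix hpref (ha 0) (hl b (by simp))
          (List.prefix_or_prefix_of_prefix ha0 hb)).symm ▸ rfl
      have hab' : a 0 = b :=
        leaf_eq_leaf_of_prefix hpref (ha 0) (hl b (by simp))
          (List.prefix_or_prefix_of_prefix ha0 hb)
      cases i with
      | zero => simpa using hab'
      | succ j =>
          have hpfx' : ls.flatten <+: flat (fun i => a (i + 1)) m := by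
            rw [List.flatten_cons, ← hab'] at hpfx
            exact (List.prefix_append_right_inj (a 0)).mp hpfx
          have := ih (fun x hx => hl x (by simp [hx])) (fun i => a (i + 1))
            (fun i => ha (i + 1)) (fun i => hne (i + 1)) m (by simp at hn; omega) hpfx' j
            (by simpa using hi)
          simpa using this

end Tree


theorem word_append_shift {p : ℕ} (d : ℕ → Fin p) (j m : ℕ) :
    word d j ++ word (fun k => d (j + k)) m = word d (j + m) := by
  induction m with
  | zero => simp [word]
  | succ m ih =>
      rw [word_succ, ← Nat.add_assoc, word_succ, ← ih, List.append_assoc]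

theorem length_le_length_flatten {p : ℕ} (L : List (List (Fin p)))
    (h : ∀ x ∈ L, x ≠ []) : L.length ≤ L.flatten.length := by
  induction L with
  | nil => simp
  | cons b t ih =>
      simp only [List.flatten_cons, List.length_append, List.length_cons]
      have h1 := List.length_pos_iff.mpr (h b (by simp))
      have h2 := ih (fun x hx => h x (by simp [hx]))
      omega

section Master
variable {p : ℕ} [hp : Fact p.Prime] {S : Set (List (Fin p))}

theorem master (hfin : S.Finite) (hroot : ([] : List (Fin p)) ∈ S)
    (hpref : ∀ v ∈ S, ∀ w : List (Fin p), w <+: v → w ∈ S)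
    (hnontriv : ∃ w ∈ S, w ≠ [])
    (hsplit : ∀ s ∈ S \ leaves p S, ∀ c : Fin p, s ++ [c] ∈ S)
    [TopologicalSpace ↥(leaves p S)] [DiscreteTopology ↥(leaves p S)] :
    ∃ E : (ℕ → ↥(leaves p S)) → ℤ_[p],
      Function.Bijective E ∧ Continuous E ∧
      ∀ l : List ↥(leaves p S),
        E ⁻¹' (padicBall p (l.map Subtype.val).flatten)
          = {a | ∀ i (h : i < l.length), a i = l.get ⟨i, h⟩} := by
  classical
  have z : Fin p := ⟨0, hp.out.pos⟩
  set ca : (ℕ → ↥(leaves p S)) → ℕ → List (Fin p) := fun a i => (a i : List (Fin p)) with hca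
  have hne : ∀ a : ℕ → ↥(leaves p S), ∀ i, ca a i ≠ [] := fun a i =>
    leaf_ne_nil hpref hnontriv (a i).2
  set E : (ℕ → ↥(leaves p S)) → ℤ_[p] := fun a => limD (conc z (ca a)) with hE
  -- membership of E a in its own balls
  have hK2 : ∀ (a : ℕ → ↥(leaves p S)) (n : ℕ), E a ∈ padicBall p (flat (ca a) n) := by
    intro a n
    apply (mem_ball_limD _ _).mpr
    exact (word_conc z (ca a) (hne a) n).symm
  -- preimage description
  have hK3 : ∀ l : List ↥(leaves p S),
      E ⁻¹' (padicBall p (l.map Subtype.val).flatten)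
        = {a | ∀ i (h : i < l.length), a i = l.get ⟨i, h⟩} := by
    intro l
    ext a
    simp only [Set.mem_preimage, Set.mem_setOf_eq]
    constructor
    · intro h
      set w : List (Fin p) := (l.map Subtype.val).flatten with hw
      have hword : w = word (conc z (ca a)) w.length := (mem_ball_limD _ _).mp h
      have hlen : w.length ≤ (flat (ca a) w.length).length :=
        le_length_flat _ (hne a) w.length
      have hpfx : w <+: flat (ca a) w.length := by
        have h2 : word (conc z (ca a)) w.length <+:
            word (conc z (ca a)) ((flat (ca a) w.length).length) := word_prefix _ hlen
        rw [← hword, word_conc z (ca a) (hne a)] at h2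
        exact h2
      have hll : l.length ≤ w.length := by
        rw [hw, ← List.length_map (as := l) Subtype.val]
        apply length_le_length_flatten
        intro x hx
        obtain ⟨y, hy, rfl⟩ := List.mem_map.mp hx
        exact leaf_ne_nil hpref hnontriv y.2
      intro i hi
      have := parse_unique_list hpref (l.map Subtype.val)
        (fun x hx => by obtain ⟨y, _, rfl⟩ := List.mem_map.mp hx; exact y.2)
        (ca a) (fun i => (a i).2) (hne a) w.length (by simpa using hll) hpfx i
        (by simpa using hi)
      apply Subtype.ext
      rw [hca] at this
      simp only at this
      rw [this]
      simp only [List.get_eq_getElem, List.getElem_map]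
    · intro h
      have hfw : flat (ca a) l.length = (l.map Subtype.val).flatten := by
        have : (List.ofFn fun i : Fin l.length => ca a i) = l.map Subtype.val := by
          apply List.ext_getElem (by simp)
          intro i h1 h2
          simp only [List.getElem_ofFn, List.getElem_map]
          have := h i (by simpa using h2)
          rw [hca]; simp only
          rw [this]
          simp [List.get_eq_getElem]
        rw [flat, this]
      rw [← hfw]
      exact hK2 a l.length
  -- injectivity
  have hinj : Function.Injective E := by
    intro a b hab
    funext i
    have hb : b ∈ E ⁻¹' (padicBall p ((List.ofFn fun j : Fin (i+1) => b j).map Subtype.val).flatten) := by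
      rw [hK3]
      intro j hj
      simp only [List.get_eq_getElem, List.getElem_ofFn]
    have ha : a ∈ E ⁻¹' (padicBall p ((List.ofFn fun j : Fin (i+1) => b j).map Subtype.val).flatten) := by
      simp only [Set.mem_preimage] at hb ⊢
      rw [hab]
      exact hb
    rw [hK3] at ha
    have h6 := ha i (by simp)
    simp only [List.get_eq_getElem, List.getElem_ofFn] at h6
    exact h6
  -- surjectivity
  have hsurj : Function.Surjective E := by
    intro x
    obtain ⟨d, hd⟩ := limD_surj x
    choose F hF1 hF2 using parse_exists (S := S) hfin hroot hsplit
    set g : ℕ → ℕ := fun n => Nat.rec 0 (fun _ o => o + (F (fun k => d (o + k))).length) n with hg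
    have hgsucc : ∀ n, g (n + 1) = g n + (F (fun k => d (g n + k))).length := fun n => rfl
    set a : ℕ → ↥(leaves p S) := fun n => ⟨F (fun k => d (g n + k)), hF1 _⟩ with haa
    have hflat : ∀ n, flat (ca a) n = word d (g n) := by
      intro n
      induction n with
      | zero => simp [word]
      | succ n ih =>
          rw [flat_succ, ih, hgsucc]
          have := hF2 (fun k => d (g n + k))
          calc word d (g n) ++ ca a n
              = word d (g n) ++ word (fun k => d (g n + k)) (F (fun k => d (g n + k))).length := by
                rw [hca]; simp only [haa]; rw [← this]
            _ = word d (g n + (F (fun k => d (g n + k))).length) := word_append_shift d _ _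
    have hglb : ∀ n, n ≤ g n := by
      intro n
      induction n with
      | zero => simp
      | succ n ih =>
          rw [hgsucc]
          have : F (fun k => d (g n + k)) ≠ [] := leaf_ne_nil hpref hnontriv (hF1 _)
          have := List.length_pos_iff.mpr this
          omega
    have hcd : conc z (ca a) = d := by
      funext k
      have hk : k < (flat (ca a) (k + 1)).length := by
        rw [hflat, length_word]
        have := hglb (k + 1)
        omega
      have h1 : conc z (ca a) k = (flat (ca a) (k + 1))[k] := conc_eq z _ (hne a) hk
      rw [h1]
      have h2 : (flat (ca a) (k + 1))[k] = (word d (g (k + 1)))[k]'(by have h7 := hk; rwa [hflat] at h7) := by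
        congr 1
        exact hflat (k + 1)
      rw [h2, getElem_word]
    refine ⟨a, ?_⟩
    rw [hE]
    simp only
    rw [hcd, hd]
  -- continuity
  have hcont : Continuous E := by
    rw [continuous_iff_continuousAt]
    intro a
    rw [ContinuousAt, Metric.tendsto_nhds]
    intro ε hε
    have hp1 : (1 : ℝ) < p := by exact_mod_cast hp.out.one_lt
    obtain ⟨n, hn⟩ : ∃ n : ℕ, ((p : ℝ)⁻¹) ^ n < ε :=
      exists_pow_lt_of_lt_one hε (by rw [inv_lt_one_iff₀]; right; exact hp1)
    have hcyl : {b : ℕ → ↥(leaves p S) | ∀ i < n, b i = a i} ∈ nhds a := by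
      have heq : {b : ℕ → ↥(leaves p S) | ∀ i < n, b i = a i}
          = ⋂ i ∈ Finset.range n, (fun b : ℕ → ↥(leaves p S) => b i) ⁻¹' {a i} := by
        ext b; simp [Finset.mem_range]
      rw [heq]
      refine (Filter.biInter_finset_mem (Finset.range n)).mpr ?_
      intro i _
      exact (continuous_apply i).continuousAt.preimage_mem_nhds
        ((isOpen_discrete {a i}).mem_nhds rfl)
    filter_upwards [hcyl] with b hb
    have hfn : (fun i : Fin n => ca b i) = fun i : Fin n => ca a i := by
      funext i
      rw [hca]
      simp only
      rw [hb i i.isLt]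
    have hfb : flat (ca b) n = flat (ca a) n := by
      rw [flat, flat, hfn]
    have h1 := hK2 a n
    have h2 := hK2 b n
    rw [hfb] at h2
    set w := flat (ca a) n with hwdef
    have hnle : n ≤ w.length := le_length_flat _ (hne a) n
    have hb1 : ‖E a - (wordVal p w : ℤ_[p])‖ ≤ (p : ℝ) ^ (-(w.length : ℤ)) := h1
    have hb2 : ‖E b - (wordVal p w : ℤ_[p])‖ ≤ (p : ℝ) ^ (-(w.length : ℤ)) := h2
    have hdd : dist (E b) (E a) ≤ (p : ℝ) ^ (-(w.length : ℤ)) := by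
      rw [dist_eq_norm]
      have hsplit2 : E b - E a
          = (E b - (wordVal p w : ℤ_[p])) + ((wordVal p w : ℤ_[p]) - E a) := by ring
      rw [hsplit2]
      refine le_trans (PadicInt.nonarchimedean _ _) (max_le hb2 ?_)
      rw [norm_sub_rev]
      exact hb1
    calc dist (E b) (E a) ≤ (p : ℝ) ^ (-(w.length : ℤ)) := hdd
      _ ≤ (p : ℝ) ^ (-(n : ℤ)) := by
          apply zpow_le_zpow_right₀ hp1.le
          omega
      _ = ((p : ℝ)⁻¹) ^ n := by
          rw [zpow_neg, ← zpow_natCast, ← inv_zpow, zpow_natCast]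
      _ < ε := hn
  exact ⟨E, ⟨hinj, hsurj⟩, hcont, hK3⟩

end Master

end Tiles

/-- Given tiles `S` of the `p`-ary tree and `S'` of the `q`-ary tree with equally many
leaves, any bijection `τ : L(S) → L(S')` induces a homeomorphism `φ : ℤ_p → ℤ_q` mapping,
for every `n ≥ 1` and all leaves `ℓ₁, …, ℓₙ ∈ L(S)`, the ball `B_{ℓ₁ ++ ⋯ ++ ℓₙ}` onto
the ball `B_{τ(ℓ₁) ++ ⋯ ++ τ(ℓₙ)}`. -/
theorem homeomorph_padicInt_of_tiles (p q : ℕ) [Fact p.Prime] [Fact q.Prime]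
    (S : Set (List (Fin p))) (S' : Set (List (Fin q)))
    (hfin : S.Finite) (hroot : ([] : List (Fin p)) ∈ S)
    (hpref : ∀ v ∈ S, ∀ w : List (Fin p), w <+: v → w ∈ S)
    (hnontriv : ∃ w ∈ S, w ≠ [])
    (hsplit : ∀ s ∈ S \ leaves p S, ∀ c : Fin p, s ++ [c] ∈ S)
    (hfin' : S'.Finite) (hroot' : ([] : List (Fin q)) ∈ S')
    (hpref' : ∀ v ∈ S', ∀ w : List (Fin q), w <+: v → w ∈ S')
    (hnontriv' : ∃ w ∈ S', w ≠ [])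
    (hsplit' : ∀ s ∈ S' \ leaves q S', ∀ c : Fin q, s ++ [c] ∈ S')
    (hcard : (leaves p S).ncard = (leaves q S').ncard)
    (τ : ↥(leaves p S) ≃ ↥(leaves q S')) :
    ∃ φ : ℤ_[p] ≃ₜ ℤ_[q],
      ∀ l : List ↥(leaves p S), l ≠ [] →
        φ '' padicBall p (l.map Subtype.val).flatten =
          padicBall q (l.map fun x => ((τ x : ↥(leaves q S')) : List (Fin q))).flatten := by
    classical
  letI t1 : TopologicalSpace ↥(leaves p S) := ⊥
  haveI d1 : DiscreteTopology ↥(leaves p S) := ⟨rfl⟩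
  letI t2 : TopologicalSpace ↥(leaves q S') := ⊥
  haveI d2 : DiscreteTopology ↥(leaves q S') := ⟨rfl⟩
  haveI f1 : Finite ↥(leaves p S) := (hfin.subset (fun x hx => hx.1)).to_subtype
  haveI f2 : Finite ↥(leaves q S') := (hfin'.subset (fun x hx => hx.1)).to_subtype
  obtain ⟨E, hEbij, hEcont, hEpre⟩ := Tiles.master hfin hroot hpref hnontriv hsplit
  obtain ⟨E', hE'bij, hE'cont, hE'pre⟩ := Tiles.master hfin' hroot' hpref' hnontriv' hsplit'
  let EE : (ℕ → ↥(leaves p S)) ≃ ℤ_[p] := Equiv.ofBijective E hEbij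
  let EE' : (ℕ → ↥(leaves q S')) ≃ ℤ_[q] := Equiv.ofBijective E' hE'bij
  have hEEc : Continuous ⇑EE := hEcont
  have hEE'c : Continuous ⇑EE' := hE'cont
  let h1 : (ℕ → ↥(leaves p S)) ≃ₜ ℤ_[p] := hEEc.homeoOfEquivCompactToT2
  let h2 : (ℕ → ↥(leaves q S')) ≃ₜ ℤ_[q] := hEE'c.homeoOfEquivCompactToT2
  let τh : ↥(leaves p S) ≃ₜ ↥(leaves q S') :=
    { τ with
      continuous_toFun := continuous_of_discreteTopology
      continuous_invFun := continuous_of_discreteTopology }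
  let τpi : (ℕ → ↥(leaves p S)) ≃ₜ (ℕ → ↥(leaves q S')) :=
    Homeomorph.piCongrRight fun _ => τh
  let φ : ℤ_[p] ≃ₜ ℤ_[q] := h1.symm.trans (τpi.trans h2)
  refine ⟨φ, ?_⟩
  intro l _
  have himg : ∀ x : ℤ_[p],
      φ x ∈ padicBall q (l.map fun x => ((τ x : ↥(leaves q S')) : List (Fin q))).flatten
        ↔ x ∈ padicBall p (l.map Subtype.val).flatten := by
    intro x
    obtain ⟨a, rfl⟩ := hEbij.surjective x
    have hφ : φ (E a) = E' (fun i => τ (a i)) := by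
      show h2 (τpi (h1.symm (E a))) = E' (fun i => τ (a i))
      have ha : h1.symm (E a) = a := by
        show EE.symm (EE a) = a
        exact EE.symm_apply_apply a
      rw [ha]
      rfl
    rw [hφ]
    have hmm : (l.map fun x => ((τ x : ↥(leaves q S')) : List (Fin q)))
        = (l.map τ).map Subtype.val := by
      rw [List.map_map]
      rfl
    rw [hmm]
    have hq : (fun i => τ (a i)) ∈ E' ⁻¹' padicBall q ((l.map τ).map Subtype.val).flatten
        ↔ E' (fun i => τ (a i)) ∈ padicBall q ((l.map τ).map Subtype.val).flatten :=
      Iff.rfl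
    rw [← hq, hE'pre (l.map τ)]
    have hp2 : E a ∈ padicBall p (l.map Subtype.val).flatten
        ↔ a ∈ E ⁻¹' padicBall p (l.map Subtype.val).flatten := Iff.rfl
    rw [hp2, hEpre l]
    simp only [Set.mem_setOf_eq, List.length_map, List.get_eq_getElem, List.getElem_map]
    constructor
    · intro h i hi
      exact τ.injective (h i hi)
    · intro h i hi
      rw [h i hi]
  ext y
  constructor
  · rintro ⟨x, hx, rfl⟩
    exact (himg x).mpr hx
  · intro hy
    refine ⟨φ.symm y, ?_, φ.apply_symm_apply y⟩
    have := (himg (φ.symm y))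
    rw [φ.apply_symm_apply y] at this
    exact this.mp hy
end
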